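/- arXiv:2009.09340 — 7 statements merged into one kernel-verified Lean document; each statement's English description precedes it below -/
import Mathlib

section
/- Let n and k be positive integers and let e = gcd(k, n). Then gcd(2^k + 1, 2^n − 1) = 1 if n/e is odd, and gcd(2^k + 1, 2^n − 1) = 2^e + 1 if n/e is even. -/
/-- If `d` divides both `2^x - 1` and `2^y - 1`, it divides `2^gcd(x,y) - 1`. -/
lemma key_order {d x y : ℕ} (hd : 0 < d) (hx : d ∣ 2 ^ x - 1) (hy : d ∣ 2 ^ y - 1) :
    d ∣ 2 ^ Nat.gcd x y - 1 := by
  haveI : NeZero d := ⟨hd.ne'⟩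
  have conv : ∀ m : ℕ, d ∣ 2 ^ m - 1 ↔ (2 : ZMod d) ^ m = 1 := by
    intro m
    rw [← ZMod.natCast_eq_zero_iff, Nat.cast_sub Nat.one_le_two_pow,
      Nat.cast_pow, Nat.cast_two, Nat.cast_one, sub_eq_zero]
  rw [conv] at hx hy ⊢
  exact orderOf_dvd_iff_pow_eq_one.mp
    (Nat.dvd_gcd (orderOf_dvd_of_pow_eq_one hx) (orderOf_dvd_of_pow_eq_one hy))

lemma pow_add_one_mul_pow_sub_one (m : ℕ) :
    (2 ^ m + 1) * (2 ^ m - 1) = 2 ^ (2 * m) - 1 := by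
  have := Nat.sq_sub_sq (2 ^ m) 1
  simp only [one_pow] at this
  rw [← this, ← pow_mul, mul_comm m 2]

/-- Gold exponent gcd lemma: with `e = gcd(k, n)`,
`gcd(2^k + 1, 2^n − 1) = 1` if `n/e` is odd, and `= 2^e + 1` if `n/e` is even. -/
theorem gcd_two_pow_add_one_two_pow_sub_one (n k : ℕ) (hn : 0 < n) (hk : 0 < k) :
    (Odd (n / Nat.gcd k n) → Nat.gcd (2 ^ k + 1) (2 ^ n - 1) = 1) ∧
    (Even (n / Nat.gcd k n) → Nat.gcd (2 ^ k + 1) (2 ^ n - 1) = 2 ^ Nat.gcd k n + 1) := by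
  set e := Nat.gcd k n with he_def
  have he : 0 < e := Nat.gcd_pos_of_pos_left n hk
  set a := k / e with ha_def
  set b := n / e with hb_def
  have hka : k = e * a := (Nat.div_mul_cancel (Nat.gcd_dvd_left k n)).symm ▸ (mul_comm a e ▸ rfl)
  have hnb : n = e * b := (Nat.div_mul_cancel (Nat.gcd_dvd_right k n)).symm ▸ (mul_comm b e ▸ rfl)
  have hab : Nat.Coprime a b := Nat.coprime_div_gcd_div_gcd he
  set d := Nat.gcd (2 ^ k + 1) (2 ^ n - 1) with hd_def
  have hd : 0 < d := Nat.gcd_pos_of_pos_left _ (by positivity)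
  -- d divides 2^(2k) - 1
  have hd2k : d ∣ 2 ^ (2 * k) - 1 :=
    dvd_trans (Nat.gcd_dvd_left _ _) ⟨2 ^ k - 1, (pow_add_one_mul_pow_sub_one k).symm⟩
  have hdn : d ∣ 2 ^ n - 1 := Nat.gcd_dvd_right _ _
  have hdk1 : d ∣ 2 ^ k + 1 := Nat.gcd_dvd_left _ _
  -- d is odd
  have hodd_target : Odd (2 ^ n - 1) :=
    Nat.Even.sub_odd Nat.one_le_two_pow
      (Nat.even_pow.mpr ⟨even_two, hn.ne'⟩) odd_one
  have hdodd : Odd d := by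
    rcases hdn with ⟨c, hc⟩
    rw [hc] at hodd_target
    rcases Nat.even_or_odd d with hev | hodd
    · exact absurd (hev.mul_right c) (Nat.not_even_iff_odd.mpr hodd_target)
    · exact hodd
  -- d divides 2^(gcd(2k, n)) - 1
  have hg : d ∣ 2 ^ Nat.gcd (2 * k) n - 1 := key_order hd hd2k hdn
  -- gcd(2k, n) = e * gcd(2, b)
  have hgcd2k : Nat.gcd (2 * k) n = e * Nat.gcd 2 b := by
    rw [hka, hnb, ← mul_assoc, mul_comm 2 e, mul_assoc, Nat.gcd_mul_left]
    rw [mul_comm 2 a, hab.gcd_mul_left_cancel 2]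
  -- generic pow-sub-one divisibility
  have powdvd : ∀ s t : ℕ, s ∣ t → 2 ^ s - 1 ∣ 2 ^ t - 1 := by
    intro s t ⟨c, hc⟩
    rw [hc, pow_mul]
    simpa using Nat.sub_dvd_pow_sub_pow (2 ^ s) 1 c
  -- coprimality of d with 2^k - 1
  have hcop : ∀ m : ℕ, d ∣ 2 ^ k - 1 → d = 1 := by
    intro _ hdk
    have h2 : d ∣ 2 := by
      have := Nat.dvd_sub hdk1 hdk
      rw [Nat.add_sub_sub_cancel Nat.one_le_two_pow] at this
      simpa using this
    rcases (Nat.dvd_prime Nat.prime_two).mp h2 with h | h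
    · exact h
    · exact absurd (h ▸ hdodd) (by decide)
  constructor
  · -- odd case
    intro hob
    have h2b : Nat.gcd 2 b = 1 := Nat.Coprime.gcd_eq_one (Nat.coprime_two_left.mpr hob)
    rw [hgcd2k, h2b, mul_one] at hg
    exact hcop 0 (hg.trans (powdvd e k ⟨a, hka⟩))
  · -- even case
    intro heb
    have h2b : Nat.gcd 2 b = 2 := Nat.gcd_eq_left (even_iff_two_dvd.mp heb)
    rw [hgcd2k, h2b] at hg
    -- d ∣ (2^e+1)*(2^e-1)
    have hprod : d ∣ (2 ^ e + 1) * (2 ^ e - 1) := by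
      rw [pow_add_one_mul_pow_sub_one]; rwa [mul_comm e 2] at hg
    -- d coprime to 2^e - 1
    have hcop2 : Nat.Coprime d (2 ^ e - 1) := by
      have h1 : Nat.gcd d (2 ^ e - 1) ∣ 2 ^ k - 1 :=
        (Nat.gcd_dvd_right _ _).trans (powdvd e k ⟨a, hka⟩)
      have h2 : Nat.gcd d (2 ^ e - 1) ∣ 2 ^ k + 1 := (Nat.gcd_dvd_left _ _).trans hdk1
      have h3 : Nat.gcd d (2 ^ e - 1) ∣ 2 := by
        have := Nat.dvd_sub h2 h1
        rw [Nat.add_sub_sub_cancel Nat.one_le_two_pow] at this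
        simpa using this
      have hgodd : Odd (Nat.gcd d (2 ^ e - 1)) := by
        rcases (Nat.gcd_dvd_left d (2 ^ e - 1)) with ⟨c, hc⟩
        rcases Nat.even_or_odd (Nat.gcd d (2 ^ e - 1)) with hev | ho
        · exact absurd (hc ▸ hev.mul_right c) (Nat.not_even_iff_odd.mpr hdodd)
        · exact ho
      rcases (Nat.dvd_prime Nat.prime_two).mp h3 with h | h
      · exact h
      · exact absurd (h ▸ hgodd) (by decide)
    have hdvd1 : d ∣ 2 ^ e + 1 := hcop2.dvd_of_dvd_mul_right hprod
    -- reverse: 2^e + 1 ∣ d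
    have haodd : Odd a := by
      rcases Nat.even_or_odd a with hev | ho
      · exfalso
        have : 2 ∣ Nat.gcd a b := Nat.dvd_gcd (even_iff_two_dvd.mp hev)
          (even_iff_two_dvd.mp heb)
        rw [hab.gcd_eq_one] at this
        exact absurd this (by decide)
      · exact ho
    have hrev1 : 2 ^ e + 1 ∣ 2 ^ k + 1 := by
      have := haodd.nat_add_dvd_pow_add_pow (2 ^ e) 1
      rwa [one_pow, ← pow_mul, ← hka] at this
    have hrev2 : 2 ^ e + 1 ∣ 2 ^ n - 1 := by
      rcases heb with ⟨c, hc⟩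
      have h2e : 2 * e ∣ n := ⟨c, by rw [hnb, hc]; ring⟩
      have h4 : 2 ^ e + 1 ∣ 2 ^ (2 * e) - 1 := ⟨2 ^ e - 1, (pow_add_one_mul_pow_sub_one e).symm⟩
      exact h4.trans (powdvd (2 * e) n h2e)
    exact Nat.dvd_antisymm hdvd1 (Nat.dvd_gcd hrev1 hrev2)
end

section
/- Let n, k be positive integers with 1 ≤ k < n and e = gcd(k, n), and suppose n/e is odd. Then for every u ∈ F_q^*, the linearized polynomial L_u(x) = u^{2^k}·x^{2^{2k}} + u·x has exactly 2^e roots x in F_q. -/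
lemma mersenne_mod (a : ℕ) (ha : 0 < a) : ∀ b, (2 ^ b - 1) % (2 ^ a - 1) = 2 ^ (b % a) - 1 := by
  intro b
  induction b using Nat.strong_induction_on with
  | _ b ih =>
    rcases lt_or_ge b a with h | h
    · have h1 := Nat.pow_lt_pow_right (a := 2) one_lt_two h
      have h2 : (1:ℕ) ≤ 2 ^ b := Nat.one_le_two_pow
      rw [Nat.mod_eq_of_lt h, Nat.mod_eq_of_lt (by omega)]
    · have h2 : (1:ℕ) ≤ 2 ^ (b-a) := Nat.one_le_two_pow
      have h3 : (1:ℕ) ≤ 2 ^ a := Nat.one_le_two_pow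
      have h4 : 2 ^ (b-a) * (2 ^ a - 1) = 2 ^ b - 2 ^ (b-a) := by
        rw [Nat.mul_sub, mul_one, ← pow_add]
        congr 2
        omega
      have h5 : (2:ℕ) ^ (b-a) ≤ 2 ^ b := Nat.pow_le_pow_right (by norm_num) (by omega)
      have key : 2 ^ b - 1 = (2 ^ (b-a) - 1) + 2 ^ (b - a) * (2 ^ a - 1) := by omega
      rw [key, Nat.add_mul_mod_self_right, ih (b - a) (by omega),
        (Nat.mod_eq_sub_mod h).symm]

lemma mersenne_gcd : ∀ a b : ℕ, Nat.gcd (2 ^ a - 1) (2 ^ b - 1) = 2 ^ (Nat.gcd a b) - 1 := by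
  intro a
  induction a using Nat.strong_induction_on with
  | _ a ih =>
    intro b
    rcases Nat.eq_zero_or_pos a with rfl | ha
    · simp
    · rw [Nat.gcd_rec, mersenne_mod a ha b, ih (b % a) (Nat.mod_lt _ ha) a, Nat.gcd_rec a b]

lemma mersenne_dvd {a b : ℕ} (h : a ∣ b) : 2 ^ a - 1 ∣ 2 ^ b - 1 := by
  obtain ⟨t, rfl⟩ := h
  simpa [pow_mul] using Nat.sub_dvd_pow_sub_pow (2 ^ a) 1 t

lemma gcd_two_mul_of_odd {k n : ℕ} (hk : 0 < k) (hn : 0 < n) (hodd : Odd (n / Nat.gcd k n)) :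
    Nat.gcd (2 * k) n = Nat.gcd k n := by
  set e := Nat.gcd k n with he
  have he0 : 0 < e := Nat.gcd_pos_of_pos_left _ hk
  have h1 : e ∣ Nat.gcd (2*k) n :=
    Nat.dvd_gcd ((Nat.gcd_dvd_left k n).mul_left 2) (Nat.gcd_dvd_right k n)
  have h2 : Nat.gcd (2*k) n ∣ 2 * e := by
    have : Nat.gcd (2*k) n ∣ Nat.gcd (2*k) (2*n) :=
      Nat.dvd_gcd (Nat.gcd_dvd_left _ _) ((Nat.gcd_dvd_right _ _).mul_left 2)
    rwa [Nat.gcd_mul_left] at this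
  obtain ⟨t, ht⟩ := h1
  have htdvd : e * t ∣ e * 2 := by rw [mul_comm e 2]; exact ht ▸ h2
  have ht2 : t ∣ 2 := (mul_dvd_mul_iff_left (by omega : e ≠ 0)).mp htdvd
  have ht0 : 0 < t := by
    rcases Nat.eq_zero_or_pos t with rfl | h
    · exfalso; have := Nat.gcd_pos_of_pos_right (2*k) hn; omega
    · exact h
  have hle := Nat.le_of_dvd two_pos ht2
  interval_cases t
  · omega
  · exfalso
    have hd : 2 * e ∣ n := by rw [mul_comm e 2] at ht; exact ht ▸ Nat.gcd_dvd_right (2*k) n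
    have : n / e = 2 * (n / (2 * e)) := by
      rcases hd with ⟨c, hc⟩
      have h6 : n = e * (2 * c) := by rw [hc]; ring
      rw [h6, Nat.mul_div_cancel_left _ he0, ← h6, hc,
        Nat.mul_div_cancel_left _ (by omega : 0 < 2*e)]
    rw [this] at hodd
    exact (Nat.not_odd_iff_even.mpr ⟨_, (two_mul _)⟩) hodd

/-- If `n/e` is odd (`e = gcd(k,n)`), then for every nonzero `u` in the field `F` with
`2^n` elements, the linearized polynomial `L_u(x) = u^{2^k} x^{2^{2k}} + u x`
has exactly `2^e` roots in `F`. -/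
theorem card_roots_linearized_odd (n k : ℕ) (hk1 : 1 ≤ k) (hkn : k < n)
    {F : Type*} [Field F] [Fintype F] [DecidableEq F] [CharP F 2]
    (hcard : Fintype.card F = 2 ^ n)
    (hodd : Odd (n / Nat.gcd k n))
    (u : F) (hu : u ≠ 0) :
    (Finset.univ.filter fun x : F =>
        u ^ (2 ^ k) * x ^ (2 ^ (2 * k)) + u * x = 0).card = 2 ^ Nat.gcd k n := by
  classical
  set e := Nat.gcd k n with he
  set N := 2 ^ n - 1 with hN
  set d := 2 ^ e - 1 with hd
  set m := 2 ^ (2 * k) - 1 with hm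
  set K1 := 2 ^ k - 1 with hK1
  have hn0 : 0 < n := lt_of_le_of_lt (Nat.zero_le k) hkn
  have he1 : 1 ≤ e := Nat.gcd_pos_of_pos_left _ hk1
  have hek : e ∣ k := Nat.gcd_dvd_left k n
  have hen : e ∣ n := Nat.gcd_dvd_right k n
  have h2e : (1:ℕ) ≤ 2 ^ e := Nat.one_le_two_pow
  have h2e2 : (2:ℕ) ≤ 2 ^ e := by
    calc (2:ℕ) = 2 ^ 1 := rfl
    _ ≤ 2 ^ e := Nat.pow_le_pow_right (by norm_num) he1
  have hd_pos : 0 < d := by omega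
  have hN_pos : 0 < N := by
    have : (2:ℕ) ≤ 2 ^ n := by
      calc (2:ℕ) = 2 ^ 1 := rfl
      _ ≤ 2 ^ n := Nat.pow_le_pow_right (by norm_num) hn0
    omega
  have hm1 : m + 1 = 2 ^ (2 * k) := by
    have : (1:ℕ) ≤ 2 ^ (2*k) := Nat.one_le_two_pow
    omega
  have hK11 : K1 + 1 = 2 ^ k := by
    have : (1:ℕ) ≤ 2 ^ k := Nat.one_le_two_pow
    omega
  have hd_dvd_N : d ∣ N := mersenne_dvd hen
  have hd_dvd_m : d ∣ m := mersenne_dvd (Dvd.dvd.mul_left hek 2)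
  have hd_dvd_K1 : d ∣ K1 := mersenne_dvd hek
  have hgcd : Nat.gcd m N = d := by
    rw [hm, hN, mersenne_gcd, gcd_two_mul_of_odd hk1 hn0 hodd, hd]
  have hcardu : Fintype.card Fˣ = N := by rw [Fintype.card_units, hcard]
  -- the key computation characterizing nonzero roots
  have hPiff : ∀ x : F, x ≠ 0 →
      (u ^ (2 ^ k) * x ^ (2 ^ (2 * k)) + u * x = 0 ↔ x ^ m * u ^ K1 = 1) := by
    intro x hx
    have hxm : x ^ (2 ^ (2 * k)) = x ^ m * x := by rw [← pow_succ, hm1]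
    have hukk : u ^ (2 ^ k) = u ^ K1 * u := by rw [← pow_succ, hK11]
    have hadd : ∀ a b : F, a + b = 0 ↔ a = b := fun a b => by
      rw [CharTwo.add_eq_iff_eq_add, zero_add]
    rw [hxm, hukk, hadd]
    have hux : u * x ≠ 0 := mul_ne_zero hu hx
    constructor
    · intro h
      have h2 : (x ^ m * u ^ K1) * (u * x) = 1 * (u * x) := by
        rw [one_mul]; linear_combination h
      exact mul_right_cancel₀ hux h2
    · intro h
      calc u ^ K1 * u * (x ^ m * x) = (x ^ m * u ^ K1) * (u * x) := by ring
      _ = u * x := by rw [h, one_mul]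
  -- the unit group is cyclic; find a root x₀ of x^m = u^{-K1}
  obtain ⟨g, hg⟩ := IsCyclic.exists_generator (α := Fˣ)
  have horder : orderOf g = N := by
    rw [orderOf_eq_card_of_forall_mem_zpowers hg, Nat.card_eq_fintype_card, hcardu]
  have hgN : g ^ (N:ℤ) = 1 := by
    rw [zpow_natCast, ← horder, pow_orderOf_eq_one]
  set u' : Fˣ := Units.mk0 u hu with hu'
  obtain ⟨s, hs⟩ := Subgroup.mem_zpowers_iff.mp (hg u')
  set A := Int.gcdA m N with hA
  set B := Int.gcdB m N with hB
  have hbez : (d:ℤ) = (m:ℤ) * A + (N:ℤ) * B := by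
    have := Int.gcd_eq_gcd_ab (m:ℤ) (N:ℤ)
    rwa [Int.gcd_natCast_natCast, hgcd] at this
  set w : ℕ := K1 / d with hw
  have hwd : (d:ℤ) * (w:ℤ) = (K1:ℤ) := by exact_mod_cast Nat.mul_div_cancel' hd_dvd_K1
  set z : ℤ := -(s * w * A) with hzdef
  set j : ℤ := s * w * B with hjdef
  have hz : z * (m:ℤ) = -(s * (K1:ℤ)) + (N:ℤ) * j := by
    rw [hzdef, hjdef]
    linear_combination (s * (w:ℤ)) * hbez - s * hwd
  set x₀ : Fˣ := g ^ z with hx₀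
  have hx0m : x₀ ^ m = (g ^ s) ^ (-(K1:ℤ)) := by
    calc x₀ ^ m = (g ^ z) ^ (m:ℤ) := by rw [zpow_natCast]
    _ = g ^ (z * (m:ℤ)) := by rw [← zpow_mul]
    _ = g ^ (-(s * (K1:ℤ)) + (N:ℤ) * j) := by rw [hz]
    _ = g ^ (-(s * (K1:ℤ))) * (g ^ (N:ℤ)) ^ j := by rw [zpow_add, zpow_mul]
    _ = g ^ (-(s * (K1:ℤ))) := by rw [hgN, one_zpow, mul_one]
    _ = (g ^ s) ^ (-(K1:ℤ)) := by rw [← zpow_mul]; congr 1; ring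
  have hx0mu : x₀ ^ m * u' ^ K1 = 1 := by
    rw [hx0m, hs, ← zpow_natCast u' K1, ← zpow_add, neg_add_cancel, zpow_zero]
  set x0 : F := (x₀ : F) with hx0def
  have hx0ne : x0 ≠ 0 := x₀.ne_zero
  have hx0F : x0 ^ m * u ^ K1 = 1 := by
    have := congrArg Units.val hx0mu
    push_cast at this
    exact this
  -- primitive d-th root of unity and the d-th roots finset
  set D : Finset F := Polynomial.nthRootsFinset d (1:F) with hD
  have hmemD : ∀ y : F, y ∈ D ↔ y ^ d = 1 := fun y =>
    Polynomial.mem_nthRootsFinset hd_pos (1:F)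
  have hcardD : D.card = d := by
    set ζu : Fˣ := g ^ (N / d) with hζ
    have hNd_dvd : N / d ∣ N := Nat.div_dvd_of_dvd hd_dvd_N
    have hord : orderOf ζu = d := by
      rw [hζ, orderOf_pow, horder, Nat.gcd_eq_right hNd_dvd, Nat.div_div_self hd_dvd_N (by omega)]
    have hprim : IsPrimitiveRoot ((ζu : Fˣ) : F) d := by
      rw [IsPrimitiveRoot.coe_units_iff, ← hord]
      exact IsPrimitiveRoot.orderOf ζu
    exact hprim.card_nthRootsFinset
  -- the root set equals {0} ∪ x₀ · D
  have hset : (Finset.univ.filter fun x : F =>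
      u ^ (2 ^ k) * x ^ (2 ^ (2 * k)) + u * x = 0)
      = insert (0:F) (D.image (fun y => x0 * y)) := by
    ext x
    simp only [Finset.mem_filter, Finset.mem_univ, true_and, Finset.mem_insert,
      Finset.mem_image]
    constructor
    · intro hx
      by_cases h0 : x = 0
      · exact Or.inl h0
      · right
        have hx1 : x ^ m * u ^ K1 = 1 := (hPiff x h0).mp hx
        have hxm0 : x ^ m = x0 ^ m := by
          have : x ^ m * u ^ K1 = x0 ^ m * u ^ K1 := by rw [hx1, hx0F]
          exact mul_right_cancel₀ (pow_ne_zero _ hu) this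
        set yu : Fˣ := Units.mk0 x h0 * x₀⁻¹ with hyu
        have hyum : yu ^ m = 1 := by
          apply Units.ext
          push_cast [hyu, Units.val_mk0]
          rw [mul_pow, inv_pow, hxm0]
          exact mul_inv_cancel₀ (pow_ne_zero _ hx0ne)
        have hyud : yu ^ d = 1 := by
          have := (pow_gcd_eq_one (n := Fintype.card Fˣ)).mpr ⟨hyum, pow_card_eq_one⟩
          rwa [hcardu, hgcd] at this
        refine ⟨(yu : F), ?_, ?_⟩
        · rw [hmemD]
          have := congrArg Units.val hyud
          push_cast at this
          exact this
        · have : (yu : F) = x * x0⁻¹ := by push_cast [hyu]; rfl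
          rw [this]
          field_simp
    · rintro (rfl | ⟨y, hy, rfl⟩)
      · have h2k : (2:ℕ) ^ (2*k) ≠ 0 := (pow_pos (by norm_num) _).ne'
        simp [zero_pow h2k]
      · have hyd : y ^ d = 1 := (hmemD y).mp hy
        have hyne : y ≠ 0 := by
          intro h
          rw [h, zero_pow (by omega : d ≠ 0)] at hyd
          exact one_ne_zero hyd.symm
        have hym : y ^ m = 1 := by
          obtain ⟨q, hq⟩ := hd_dvd_m
          rw [hq, pow_mul, hyd, one_pow]
        apply (hPiff _ (mul_ne_zero hx0ne hyne)).mpr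
        rw [mul_pow, hym, mul_one, hx0F]
  rw [hset, Finset.card_insert_of_notMem, Finset.card_image_of_injective _
    (mul_right_injective₀ hx0ne), hcardD]
  · omega
  · intro h
    obtain ⟨y, hy, hxy⟩ := Finset.mem_image.mp h
    have hyne : y ≠ 0 := by
      intro h0
      rw [hmemD, h0, zero_pow (by omega : d ≠ 0)] at hy
      exact one_ne_zero hy.symm
    exact (mul_ne_zero hx0ne hyne) hxy
end

section
/- Let n, k be positive integers with 1 ≤ k < n and e = gcd(k, n), and suppose n/e is even. If u ∈ F_q^* is not a (2^e+1)-th power of any element of F_q^*, then x = 0 is the only root in F_q of the linearized polynomial L_u(x) = u^{2^k}·x^{2^{2k}} + u·x. -/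
/-- `2^e + 1` and `2^k - 1` are coprime when `gcd(k, 2e) = e`. -/
lemma coprime_two_pow_add_one_sub_one (e k : ℕ) (he1 : 1 ≤ e) (hk1 : 1 ≤ k)
    (hge : Nat.gcd k (2 * e) = e) : Nat.Coprime (2 ^ e + 1) (2 ^ k - 1) := by
  set d := Nat.gcd (2 ^ e + 1) (2 ^ k - 1) with hd
  have hd1 : d ∣ 2 ^ e + 1 := Nat.gcd_dvd_left _ _
  have hd2 : d ∣ 2 ^ k - 1 := Nat.gcd_dvd_right _ _
  have h2k1 : 1 ≤ 2 ^ k := Nat.one_le_two_pow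
  have h2keven : ∃ m, 2 ^ k = 2 * m := by
    rcases Nat.exists_eq_succ_of_ne_zero (Nat.one_le_iff_ne_zero.mp hk1) with ⟨m, rfl⟩
    exact ⟨2 ^ m, by rw [pow_succ, mul_comm]⟩
  have hdo : Odd d := by
    rcases Nat.even_or_odd d with hev | hod
    · exfalso
      obtain ⟨r, hr⟩ := hev
      obtain ⟨q, hq⟩ := hd2
      obtain ⟨m, hm⟩ := h2keven
      have : 2 ^ k - 1 = (r + r) * q := by rw [← hr, hq]
      have h2 : 2 ∣ 2 ^ k - 1 := ⟨r * q, by rw [this]; ring⟩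
      omega
    · exact hod
  have hdpos : 0 < d := Nat.gcd_pos_of_pos_left _ (by positivity)
  haveI : NeZero d := ⟨hdpos.ne'⟩
  -- work in ZMod d
  have hcast1 : ((2 : ZMod d)) ^ e = -1 := by
    have : ((2 ^ e + 1 : ℕ) : ZMod d) = 0 :=
      (ZMod.natCast_eq_zero_iff _ _).mpr hd1
    push_cast at this
    linear_combination this
  have hcastk : ((2 : ZMod d)) ^ k = 1 := by
    have : ((2 ^ k - 1 : ℕ) : ZMod d) = 0 :=
      (ZMod.natCast_eq_zero_iff _ _).mpr hd2
    rw [Nat.cast_sub Nat.one_le_two_pow] at this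
    push_cast at this
    linear_combination this
  have hcast2e : ((2 : ZMod d)) ^ (2 * e) = 1 := by
    rw [mul_comm, pow_mul, hcast1]
    ring
  have hge' : ((2 : ZMod d)) ^ e = 1 := by
    have := (pow_gcd_eq_one (M := ZMod d)).mpr ⟨hcastk, hcast2e⟩
    rwa [hge] at this
  have h2 : (2 : ZMod d) = 0 := by
    have h11 : (1 : ZMod d) = -1 := by rw [← hcast1, hge']
    linear_combination h11
  have hdvd2 : d ∣ 2 := by
    have : ((2 : ℕ) : ZMod d) = 0 := by push_cast; exact h2
    exact (ZMod.natCast_eq_zero_iff _ _).mp this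
  rcases (Nat.dvd_prime Nat.prime_two).mp hdvd2 with h | h
  · exact h
  · rw [h] at hdo; exact absurd hdo (by decide)

/-- If `n/e` is even (`e = gcd(k,n)`) and the nonzero `u` is not a `(2^e+1)`-th power in the
field `F` with `2^n` elements, then `x = 0` is the only root of
`L_u(x) = u^{2^k} x^{2^{2k}} + u x` in `F`. -/
theorem roots_linearized_even_nonpow (n k e : ℕ) (hk1 : 1 ≤ k) (hkn : k < n)
    (he : e = Nat.gcd k n)
    {F : Type*} [Field F] [Fintype F] [DecidableEq F] [CharP F 2]
    (hcard : Fintype.card F = 2 ^ n)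
    (heven : Even (n / e))
    (u : F) (hu : u ≠ 0)
    (hpow : ¬ ∃ w : F, w ≠ 0 ∧ w ^ (2 ^ e + 1) = u) :
    ∀ x : F, u ^ (2 ^ k) * x ^ (2 ^ (2 * k)) + u * x = 0 ↔ x = 0 := by
  -- basic arithmetic facts
  have he1 : 1 ≤ e := by
    rw [he]; exact Nat.gcd_pos_of_pos_left _ hk1
  have hek : e ∣ k := he ▸ Nat.gcd_dvd_left k n
  have hen : e ∣ n := he ▸ Nat.gcd_dvd_right k n
  obtain ⟨a, hka⟩ := hek
  obtain ⟨b, hnb⟩ := hen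
  have hbe : b = n / e := by rw [hnb]; exact (Nat.mul_div_cancel_left b (by omega)).symm
  have hbeven : Even b := hbe ▸ heven
  have hacop : Nat.Coprime a b := by
    have := Nat.coprime_div_gcd_div_gcd (m := k) (n := n) (by rw [← he]; omega)
    rwa [← he, hka, hnb, Nat.mul_div_cancel_left a (by omega),
      Nat.mul_div_cancel_left b (by omega)] at this
  have haodd : Odd a := by
    rcases Nat.even_or_odd a with ha | ha
    · exfalso
      obtain ⟨c, hc⟩ := ha
      obtain ⟨c', hc'⟩ := hbeven
      have : 2 ∣ Nat.gcd a b := Nat.dvd_gcd ⟨c, by omega⟩ ⟨c', by omega⟩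
      rw [hacop] at this
      omega
    · exact ha
  have hgke : Nat.gcd k (2 * e) = e := by
    rw [hka, show 2 * e = e * 2 by ring, Nat.gcd_mul_left]
    have ha2 : Nat.gcd a 2 = 1 := by
      rw [Nat.gcd_comm]
      refine (Nat.prime_two.coprime_iff_not_dvd).mpr ?_
      intro ⟨c, hc⟩
      obtain ⟨m, hm⟩ := haodd
      omega
    rw [ha2, mul_one]
  -- 2^e + 1 divides 2^k + 1
  have hdvd_k1 : 2 ^ e + 1 ∣ 2 ^ k + 1 := by
    have := haodd.nat_add_dvd_pow_add_pow (2 ^ e) 1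
    rwa [one_pow, ← pow_mul, ← hka] at this
  -- 2^e + 1 divides 2^n - 1
  have hdvd_n : 2 ^ e + 1 ∣ 2 ^ n - 1 := by
    obtain ⟨c, hc⟩ := hbeven
    have h2e : n = (2 * e) * c := by rw [hnb, hc]; ring
    have h1 : 2 ^ (2 * e) - 1 ∣ 2 ^ n - 1 := by
      have := Nat.sub_dvd_pow_sub_pow (2 ^ (2 * e)) 1 c
      rwa [one_pow, ← pow_mul, ← h2e] at this
    refine dvd_trans ?_ h1
    refine ⟨2 ^ e - 1, ?_⟩
    obtain ⟨m, hm⟩ : ∃ m, 2 ^ e = m + 1 := ⟨2 ^ e - 1, by have := Nat.one_le_two_pow (n := e); omega⟩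
    rw [two_mul, pow_add, hm]
    have hr : (m + 1) * (m + 1) = (m + 1 + 1) * m + 1 := by ring
    simp only [Nat.add_sub_cancel]
    omega
  have hcop : Nat.Coprime (2 ^ e + 1) (2 ^ k - 1) :=
    coprime_two_pow_add_one_sub_one e k he1 hk1 hgke
  intro x
  constructor
  · intro hx
    by_contra hx0
    -- char 2 : the equation gives an equality
    have heq : u ^ (2 ^ k) * x ^ (2 ^ (2 * k)) = u * x :=
      (eq_neg_of_add_eq_zero_left hx).trans (CharTwo.neg_eq _)
    exfalso; apply hpow
    -- move to the unit group
    obtain ⟨g, hg⟩ := IsCyclic.exists_generator (α := Fˣ)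
    have hN : orderOf g = 2 ^ n - 1 := by
      rw [orderOf_eq_card_of_forall_mem_zpowers hg, Nat.card_eq_fintype_card,
        Fintype.card_units, hcard]
    set U : Fˣ := Units.mk0 u hu with hU
    set X : Fˣ := Units.mk0 x hx0 with hX
    obtain ⟨s, hs⟩ := hg U
    obtain ⟨t, ht⟩ := hg X
    have hs' : g ^ s = U := hs
    have ht' : g ^ t = X := ht
    have hunit : U ^ (2 ^ k) * X ^ (2 ^ (2 * k)) = U * X := by
      ext
      push_cast
      exact heq
    have hck : ((2 : ℤ) ^ k) = ((2 ^ k : ℕ) : ℤ) := by push_cast; ring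
    have hck2 : ((2 : ℤ) ^ (2 * k)) = ((2 ^ (2 * k) : ℕ) : ℤ) := by push_cast; ring
    have hzpow : g ^ (s * 2 ^ k + t * 2 ^ (2 * k)) = g ^ (s + t) := by
      rw [zpow_add, zpow_add, zpow_mul, zpow_mul, hs', ht', hck, hck2,
        zpow_natCast, zpow_natCast]
      exact hunit
    have hdvd : ((2 ^ n - 1 : ℕ) : ℤ) ∣ (s * 2 ^ k + t * 2 ^ (2 * k) - (s + t)) := by
      rw [← hN, orderOf_dvd_iff_zpow_eq_one, zpow_sub, hzpow, mul_inv_cancel]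
    -- factor the exponent
    have hfact : s * 2 ^ k + t * 2 ^ (2 * k) - (s + t)
        = ((2:ℤ) ^ k - 1) * (s + t * (2 ^ k + 1)) := by
      have h2k : (2:ℤ) ^ (2 * k) = 2 ^ k * 2 ^ k := by rw [two_mul, pow_add]
      rw [h2k]; ring
    rw [hfact] at hdvd
    -- pass to divisibility by 2^e+1
    have hNe : ((2 ^ e + 1 : ℕ) : ℤ) ∣ ((2 ^ n - 1 : ℕ) : ℤ) := Int.natCast_dvd_natCast.mpr hdvd_n
    have hdvd' : ((2 ^ e + 1 : ℕ) : ℤ) ∣ ((2:ℤ) ^ k - 1) * (s + t * (2 ^ k + 1)) :=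
      dvd_trans hNe hdvd
    have hcopZ : IsCoprime ((2 ^ e + 1 : ℕ) : ℤ) ((2:ℤ) ^ k - 1) := by
      have := Nat.isCoprime_iff_coprime.mpr hcop
      have hcast : ((2 ^ k - 1 : ℕ) : ℤ) = (2:ℤ) ^ k - 1 := by
        rw [Nat.cast_sub Nat.one_le_two_pow]; push_cast; ring
      rwa [hcast] at this
    have hdvdX : ((2 ^ e + 1 : ℕ) : ℤ) ∣ (s + t * (2 ^ k + 1)) :=
      hcopZ.dvd_of_dvd_mul_left hdvd'
    have hdvdk1 : ((2 ^ e + 1 : ℕ) : ℤ) ∣ ((2:ℤ) ^ k + 1) := by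
      have := Int.natCast_dvd_natCast.mpr hdvd_k1
      push_cast at this
      exact_mod_cast this
    have hdvds : ((2 ^ e + 1 : ℕ) : ℤ) ∣ s := by
      have h1 : ((2 ^ e + 1 : ℕ) : ℤ) ∣ t * (2 ^ k + 1) := Dvd.dvd.mul_left hdvdk1 t
      have := dvd_sub hdvdX h1
      simpa using this
    obtain ⟨s'', hs''⟩ := hdvds
    refine ⟨(g ^ s'' : Fˣ), Units.ne_zero _, ?_⟩
    have hpw : ((g ^ s'') ^ (2 ^ e + 1) : Fˣ) = U := by
      rw [← zpow_natCast (g ^ s''), ← zpow_mul, ← hs', hs'']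
      ring_nf
    calc ((g ^ s'' : Fˣ) : F) ^ (2 ^ e + 1)
        = (((g ^ s'') ^ (2 ^ e + 1) : Fˣ) : F) := by push_cast; ring
      _ = u := by rw [hpw, hU, Units.val_mk0]
  · rintro rfl
    rw [zero_pow (by positivity), mul_zero, mul_zero, add_zero]
end

section
/- Let n, k be positive integers with 1 ≤ k < n and e = gcd(k, n), and suppose n/e is odd. Then Σ_{x ∈ F_q} χ1(u·x^{2^k+1}) = q = 2^n if u = 0, and Σ_{x ∈ F_q} χ1(u·x^{2^k+1}) = 0 for every u ∈ F_q^*. -/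
/-- The absolute trace map `Tr : F → F_2`, viewed inside `F` (its values lie in `{0,1}`),
for a field `F` with `2^n` elements. -/
def absTr (n : ℕ) {F : Type*} [Field F] (x : F) : F :=
  ∑ i ∈ Finset.range n, x ^ (2 ^ i)

/-- The canonical additive character `χ1(x) = (−1)^{Tr(x)} ∈ ℤ`. -/
def chi (n : ℕ) {F : Type*} [Field F] [DecidableEq F] (x : F) : ℤ :=
  if absTr n x = 0 then 1 else -1

section Aux

variable {F : Type*} [Field F]

lemma aux_pow_two_pow_mul {z : F} {a : ℕ} (h : z ^ (2 ^ a) = z) (q : ℕ) :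
    z ^ (2 ^ (a * q)) = z := by
  induction q with
  | zero => simp
  | succ q ih =>
    rw [Nat.mul_succ, pow_add, pow_mul, ih, h]

lemma aux_pow_two_pow_gcd (a : ℕ) : ∀ b : ℕ, ∀ z : F, z ^ (2 ^ a) = z → z ^ (2 ^ b) = z →
    z ^ (2 ^ Nat.gcd a b) = z := by
  induction a using Nat.strong_induction_on with
  | _ a ih =>
    intro b z ha hb
    rcases Nat.eq_zero_or_pos a with rfl | hpos
    · simpa using hb
    · rw [Nat.gcd_rec]
      refine ih (b % a) (Nat.mod_lt _ hpos) a z ?_ ha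
      have h1 : z ^ (2 ^ (a * (b / a))) = z := aux_pow_two_pow_mul ha _
      calc z ^ 2 ^ (b % a) = (z ^ 2 ^ (a * (b / a))) ^ 2 ^ (b % a) := by rw [h1]
        _ = z ^ (2 ^ (a * (b / a)) * 2 ^ (b % a)) := (pow_mul ..).symm
        _ = z ^ 2 ^ (a * (b / a) + b % a) := by rw [pow_add]
        _ = z ^ 2 ^ b := by rw [Nat.div_add_mod]
        _ = z := hb

lemma aux_gcd_two_mul {k n : ℕ} (hk1 : 1 ≤ k) (hodd : Odd (n / Nat.gcd k n)) :
    Nat.gcd (2 * k) n = Nat.gcd k n := by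
  set e := Nat.gcd k n with he
  have hepos : 0 < e := Nat.gcd_pos_of_pos_left n hk1
  have hdvd1 : e ∣ Nat.gcd (2 * k) n :=
    Nat.dvd_gcd (dvd_mul_of_dvd_right (Nat.gcd_dvd_left k n) 2) (Nat.gcd_dvd_right k n)
  have hdvd2 : Nat.gcd (2 * k) n ∣ 2 * e := by
    rw [he, ← Nat.gcd_mul_left]
    exact Nat.dvd_gcd (Nat.gcd_dvd_left _ _) (dvd_mul_of_dvd_right (Nat.gcd_dvd_right _ _) 2)
  obtain ⟨c, hc⟩ := hdvd1
  have hcdvd : c ∣ 2 := by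
    have : e * c ∣ e * 2 := by rw [← hc]; rw [mul_comm e 2]; exact hdvd2
    exact (mul_dvd_mul_iff_left hepos.ne').mp this
  rcases (Nat.dvd_prime Nat.prime_two).mp hcdvd with rfl | rfl
  · omega
  · exfalso
    have h2e : 2 * e ∣ n := by
      have := Nat.gcd_dvd_right (2 * k) n
      rw [hc, mul_comm e 2] at this
      exact this
    obtain ⟨m, hm⟩ := h2e
    have : n / e = 2 * m := by
      rw [hm, mul_comm 2 e, mul_assoc, Nat.mul_div_cancel_left _ hepos]
    rw [this] at hodd
    exact (Nat.not_odd_iff_even.mpr ⟨m, by ring⟩) hodd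

variable [Fintype F] [DecidableEq F] [CharP F 2]

lemma aux_pow_gold_injective {n k : ℕ} (hk1 : 1 ≤ k) (hkn : k < n)
    (hcard : Fintype.card F = 2 ^ n) (hodd : Odd (n / Nat.gcd k n)) :
    Function.Injective (fun x : F => x ^ (2 ^ k + 1)) := by
  intro x y hxy
  simp only at hxy
  by_cases hy : y = 0
  · subst hy
    rw [zero_pow (by positivity)] at hxy
    exact pow_eq_zero_iff (by positivity) |>.mp hxy
  · set z : F := x * y⁻¹ with hz
    have hzd : z ^ (2 ^ k + 1) = 1 := by
      rw [hz, mul_pow, hxy, inv_pow, mul_inv_cancel₀ (pow_ne_zero _ hy)]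
    have hz0 : z ≠ 0 := by
      intro h
      rw [h, zero_pow (by positivity)] at hzd
      exact zero_ne_one hzd
    have hzk : z ^ (2 ^ k) = z⁻¹ := by
      field_simp
      rw [← pow_succ]
      exact hzd
    have hzn : z ^ (2 ^ n) = z := by
      rw [← hcard]; exact FiniteField.pow_card z
    have hz2k : z ^ (2 ^ (2 * k)) = z := by
      rw [two_mul, pow_add, pow_mul, hzk, inv_pow, hzk, inv_inv]
    have hge : z ^ (2 ^ Nat.gcd (2 * k) n) = z := aux_pow_two_pow_gcd _ _ _ hz2k hzn
    rw [aux_gcd_two_mul hk1 hodd] at hge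
    obtain ⟨m, hm⟩ := Nat.gcd_dvd_left k n
    have hzk' : z ^ (2 ^ k) = z := by rw [hm]; exact aux_pow_two_pow_mul hge m
    have hzinv : z⁻¹ = z := by rw [← hzk, hzk']
    have hz2 : z * z = 1 := by
      nth_rewrite 2 [← hzinv]
      exact mul_inv_cancel₀ hz0
    have hz1 : z = 1 := by
      have hsq : (z + 1) ^ 2 = 0 := by
        rw [add_pow_char z 1 2, one_pow, sq, hz2, CharTwo.add_self_eq_zero]
      have h0 : z + 1 = 0 := pow_eq_zero_iff (two_ne_zero) |>.mp hsq
      have h1 : z = -1 := eq_neg_of_add_eq_zero_left h0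
      rwa [CharTwo.neg_eq] at h1
    rw [hz] at hz1
    field_simp at hz1
    exact hz1

lemma aux_absTr_add {n : ℕ} (x y : F) : absTr n (x + y) = absTr n x + absTr n y := by
  unfold absTr
  rw [← Finset.sum_add_distrib]
  exact Finset.sum_congr rfl fun i _ => add_pow_char_pow x y 2 i

lemma aux_absTr_zero {n : ℕ} : absTr n (0 : F) = 0 := by
  unfold absTr
  exact Finset.sum_eq_zero fun i _ => zero_pow (by positivity)

lemma aux_absTr_sq {n : ℕ} (hcard : Fintype.card F = 2 ^ n) (x : F) :
    absTr n x * absTr n x = absTr n x := by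
  have hx : x ^ (2 ^ n) = x := by rw [← hcard]; exact FiniteField.pow_card x
  unfold absTr
  have h1 : (∑ i ∈ Finset.range n, x ^ 2 ^ i) * (∑ i ∈ Finset.range n, x ^ 2 ^ i)
      = ∑ i ∈ Finset.range n, x ^ 2 ^ (i + 1) := by
    rw [← sq, sum_pow_char]
    exact Finset.sum_congr rfl fun i _ => by rw [← pow_mul, pow_succ]
  rw [h1]
  have h2 : ∑ i ∈ Finset.range (n + 1), x ^ 2 ^ i
      = ∑ i ∈ Finset.range n, x ^ 2 ^ (i + 1) + x ^ 2 ^ 0 := Finset.sum_range_succ' _ _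
  have h3 : ∑ i ∈ Finset.range (n + 1), x ^ 2 ^ i
      = ∑ i ∈ Finset.range n, x ^ 2 ^ i + x ^ 2 ^ n := Finset.sum_range_succ _ _
  have h4 : (x : F) ^ 2 ^ n = x ^ 2 ^ 0 := by rw [hx, pow_zero, pow_one]
  have := h2.symm.trans h3
  rw [h4] at this
  exact add_right_cancel this

lemma aux_absTr_cases {n : ℕ} (hcard : Fintype.card F = 2 ^ n) (x : F) :
    absTr n x = 0 ∨ absTr n x = 1 := by
  have h := aux_absTr_sq hcard x
  have : absTr n x * (absTr n x - 1) = 0 := by linear_combination h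
  rcases mul_eq_zero.mp this with h | h
  · exact Or.inl h
  · exact Or.inr (by linear_combination h)

lemma aux_chi_add {n : ℕ} (hcard : Fintype.card F = 2 ^ n) (x y : F) :
    chi n (x + y) = chi n x * chi n y := by
  unfold chi
  rw [aux_absTr_add]
  rcases aux_absTr_cases hcard x with hx | hx <;>
    rcases aux_absTr_cases hcard y with hy | hy <;>
      simp [hx, hy, CharTwo.add_self_eq_zero (1 : F), one_ne_zero]

lemma aux_exists_tr_ne_zero {n : ℕ} (hn : 1 ≤ n) (hcard : Fintype.card F = 2 ^ n) :
    ∃ t : F, absTr n t ≠ 0 := by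
  by_contra h
  push_neg at h
  set p : Polynomial F := ∑ i ∈ Finset.range n, Polynomial.X ^ (2 ^ i) with hp
  have heval : ∀ t : F, p.eval t = 0 := by
    intro t
    have : p.eval t = absTr n t := by
      rw [hp, Polynomial.eval_finset_sum]
      unfold absTr
      exact Finset.sum_congr rfl fun i _ => by rw [Polynomial.eval_pow, Polynomial.eval_X]
    rw [this]; exact h t
  have hdeg : p.natDegree < Fintype.card F := by
    rw [hcard]
    refine lt_of_le_of_lt (Polynomial.natDegree_sum_le_of_forall_le _ _
      (fun i hi => ?_)) (Nat.pow_lt_pow_right one_lt_two (Nat.sub_lt hn one_pos) : 2 ^ (n-1) < 2 ^ n)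
    rw [Polynomial.natDegree_X_pow]
    exact Nat.pow_le_pow_right (by norm_num) (by
      have := Finset.mem_range.mp hi; omega)
  have hp0 : p = 0 :=
    Polynomial.eq_zero_of_natDegree_lt_card_of_eval_eq_zero p Function.injective_id
      (fun t => heval t) hdeg
  have hc1 : p.coeff 1 = 1 := by
    rw [hp, Polynomial.finset_sum_coeff]
    rw [Finset.sum_eq_single 0]
    · simp
    · intro i _ hi0
      rw [Polynomial.coeff_X_pow]
      have : 2 ^ i ≠ 1 := by
        have := Nat.one_lt_two_pow_iff.mpr hi0
        omega
      simp [this.symm]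
    · intro h0
      exact absurd (Finset.mem_range.mpr hn) h0
  rw [hp0] at hc1
  simp at hc1

lemma aux_sum_chi_zero {n : ℕ} (hn : 1 ≤ n) (hcard : Fintype.card F = 2 ^ n) :
    ∑ x : F, chi n x = 0 := by
  obtain ⟨t, ht⟩ := aux_exists_tr_ne_zero hn hcard
  have h1 : ∑ x : F, chi n (x + t) = ∑ x : F, chi n x :=
    Fintype.sum_equiv (Equiv.addRight t) _ _ (fun x => rfl)
  have h2 : ∑ x : F, chi n (x + t) = -∑ x : F, chi n x := by
    have : ∀ x : F, chi n (x + t) = chi n x * chi n t := fun x => aux_chi_add hcard x t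
    simp only [this]
    rw [← Finset.sum_mul]
    have : chi n t = -1 := by unfold chi; simp [ht]
    rw [this]; ring
  omega

end Aux

/-- If `n/e` is odd (`e = gcd(k,n)`), then `Σ_x χ1(u x^{2^k+1})` equals `2^n` for `u = 0`
and equals `0` for every nonzero `u`. -/
theorem weil_sum_gold_no_linear_term_odd (n k : ℕ) (hk1 : 1 ≤ k) (hkn : k < n)
    {F : Type*} [Field F] [Fintype F] [DecidableEq F] [CharP F 2]
    (hcard : Fintype.card F = 2 ^ n)
    (hodd : Odd (n / Nat.gcd k n)) :
    (∑ x : F, chi n ((0 : F) * x ^ (2 ^ k + 1)) = 2 ^ n) ∧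
    (∀ u : F, u ≠ 0 → ∑ x : F, chi n (u * x ^ (2 ^ k + 1)) = 0) := by
  have hn : 1 ≤ n := le_trans hk1 hkn.le
  constructor
  · have : ∀ x : F, chi n ((0 : F) * x ^ (2 ^ k + 1)) = 1 := by
      intro x
      rw [zero_mul]
      unfold chi
      simp [aux_absTr_zero]
    simp only [this]
    rw [Finset.sum_const, Finset.card_univ, hcard]
    simp
  · intro u hu
    have hbij : Function.Bijective (fun x : F => u * x ^ (2 ^ k + 1)) := by
      have hinj : Function.Injective (fun x : F => u * x ^ (2 ^ k + 1)) := by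
        intro x y hxy
        simp only at hxy
        exact aux_pow_gold_injective hk1 hkn hcard hodd
          (mul_left_cancel₀ hu hxy)
      exact Finite.injective_iff_bijective.mp hinj
    have := Fintype.sum_bijective _ hbij (fun x : F => chi n (u * x ^ (2 ^ k + 1)))
      (fun y : F => chi n y) (fun x => rfl)
    rw [this]
    exact aux_sum_chi_zero hn hcard
end

section
/- Let n, k be positive integers with 1 ≤ k < n and e = gcd(k, n), and suppose n/e is even. Let u, v ∈ F_q^*, suppose u = w^{2^e+1} for some w ∈ F_q^*, and suppose the equation L_u(x) = v^{2^k} has no solution x ∈ F_q, where L_u(x) = u^{2^k}·x^{2^{2k}} + u·x. Then the Weil sum S(u, v) = 0. -/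
set_option linter.unusedSectionVars false

section Helpers

variable {n : ℕ} {F : Type*} [Field F] [Fintype F] [DecidableEq F] [CharP F 2]

lemma ppow (x : F) (a b : ℕ) : (x ^ 2 ^ a) ^ 2 ^ b = x ^ 2 ^ (a + b) := by
  rw [← pow_mul, ← pow_add]

lemma fix_mul {x : F} {a : ℕ} (h : x ^ 2 ^ a = x) (m : ℕ) : x ^ 2 ^ (a * m) = x := by
  induction m with
  | zero => simp
  | succ m ih => rw [Nat.mul_succ, ← ppow, ih, h]

variable (hcard : Fintype.card F = 2 ^ n)
include hcard

lemma frobn (x : F) : x ^ 2 ^ n = x := by rw [← hcard]; exact FiniteField.pow_card x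

lemma frob2n (x : F) : x ^ 2 ^ (2 * n) = x := by
  rw [two_mul, ← ppow, frobn hcard, frobn hcard]

omit hcard in
lemma absTr_add (x y : F) : absTr n (x + y) = absTr n x + absTr n y := by
  unfold absTr
  rw [← Finset.sum_add_distrib]
  exact Finset.sum_congr rfl fun i _ => add_pow_char_pow x y 2 i

lemma absTr_sq (x : F) : absTr n (x ^ 2) = absTr n x := by
  have key : ∀ i, (x ^ 2) ^ 2 ^ i = x ^ 2 ^ (i + 1) := by
    intro i; rw [← pow_mul, pow_succ, Nat.mul_comm]
  have h1 := Finset.sum_range_succ' (fun i => x ^ 2 ^ i) n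
  have h2 := Finset.sum_range_succ (fun i => x ^ 2 ^ i) n
  unfold absTr
  calc ∑ i ∈ Finset.range n, (x ^ 2) ^ 2 ^ i
      = ∑ i ∈ Finset.range n, x ^ 2 ^ (i + 1) := Finset.sum_congr rfl fun i _ => key i
    _ = ∑ i ∈ Finset.range n, x ^ 2 ^ i := by
        have : (∑ i ∈ Finset.range n, x ^ 2 ^ (i + 1)) + x ^ 2 ^ 0
            = (∑ i ∈ Finset.range n, x ^ 2 ^ i) + x ^ 2 ^ n := h1.symm.trans h2
        rw [frobn hcard, pow_zero, pow_one] at this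
        exact add_right_cancel this

lemma absTr_frob (m : ℕ) (x : F) : absTr n (x ^ 2 ^ m) = absTr n x := by
  induction m with
  | zero => simp
  | succ m ih =>
      have : x ^ 2 ^ (m + 1) = (x ^ 2 ^ m) ^ 2 := by rw [← pow_mul, pow_succ]
      rw [this, absTr_sq hcard, ih]

lemma absTr_zero_one (x : F) : absTr n x = 0 ∨ absTr n x = 1 := by
  have h : (absTr n x) ^ 2 = absTr n x := by
    unfold absTr
    rw [sum_pow_char]
    calc ∑ i ∈ Finset.range n, (x ^ 2 ^ i) ^ 2
        = ∑ i ∈ Finset.range n, (x ^ 2) ^ 2 ^ i := by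
          refine Finset.sum_congr rfl fun i _ => ?_
          rw [← pow_mul, ← pow_mul, mul_comm]
      _ = absTr n (x ^ 2) := rfl
      _ = absTr n x := absTr_sq hcard x
  have h2 : absTr n x * (absTr n x - 1) = 0 := by linear_combination h
  rcases mul_eq_zero.mp h2 with h3 | h3
  · exact Or.inl h3
  · exact Or.inr (by linear_combination h3)

lemma chi_add (x y : F) : chi n (x + y) = chi n x * chi n y := by
  unfold chi
  rw [absTr_add]
  rcases absTr_zero_one hcard x with h1 | h1 <;> rcases absTr_zero_one hcard y with h2 | h2 <;>
    simp [h1, h2, CharTwo.add_self_eq_zero, one_ne_zero]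

end Helpers

section Test2
variable {n : ℕ} {F : Type*} [Field F] [Fintype F] [DecidableEq F] [CharP F 2]

example : absTr n (0 : F) = 0 := by simp [absTr]

lemma exists_absTr_ne (hn : 0 < n) (hcard : Fintype.card F = 2 ^ n) :
    ∃ x : F, absTr n x ≠ 0 := by
  by_contra hc
  push_neg at hc
  set p : Polynomial F := ∑ i ∈ Finset.range n, Polynomial.X ^ (2 ^ i) with hp
  have heval : ∀ x : F, p.eval x = 0 := by
    intro x
    have : p.eval x = absTr n x := by simp [hp, absTr, Polynomial.eval_finset_sum]
    rw [this, hc]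
  have hdeg : p.natDegree ≤ 2 ^ (n - 1) := by
    apply Polynomial.natDegree_sum_le_of_forall_le
    intro i hi
    rw [Polynomial.natDegree_X_pow]
    have : i ≤ n - 1 := by have := Finset.mem_range.mp hi; omega
    exact Nat.pow_le_pow_right (by norm_num) this
  have hzero : p = 0 := by
    apply Polynomial.eq_zero_of_natDegree_lt_card_of_eval_eq_zero' p Finset.univ
      (fun x _ => heval x)
    calc p.natDegree ≤ 2 ^ (n - 1) := hdeg
      _ < 2 ^ n := Nat.pow_lt_pow_right (by norm_num) (by omega)
      _ = Finset.univ.card := by rw [Finset.card_univ, hcard]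
  have hcoeff : p.coeff (2 ^ (n - 1)) = 1 := by
    rw [hp, Polynomial.finset_sum_coeff]
    rw [Finset.sum_eq_single (n - 1)]
    · simp [Polynomial.coeff_X_pow]
    · intro i hi hine
      rw [Polynomial.coeff_X_pow]
      have hne : ¬ (n - 1 = i) := fun h => hine h.symm
      simp [hne]
    · intro h
      exact absurd (Finset.mem_range.mpr (by omega)) h
  rw [hzero] at hcoeff
  simp at hcoeff
end Test2

section Helpers2
variable {n : ℕ} {F : Type*} [Field F] [Fintype F] [DecidableEq F] [CharP F 2]

lemma absTr_zero : absTr n (0 : F) = 0 := by simp [absTr]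

lemma chi_zero : chi n (0 : F) = 1 := by simp [chi, absTr_zero]

lemma sum_chi_eq_zero (hn : 0 < n) (hcard : Fintype.card F = 2 ^ n) {b : F} (hb : b ≠ 0) :
    ∑ x : F, chi n (b * x) = 0 := by
  obtain ⟨x₀, hx₀⟩ := exists_absTr_ne hn hcard
  have hchi : chi n x₀ = -1 := by simp [chi, hx₀]
  have key : ∑ x : F, chi n (b * x) = - ∑ x : F, chi n (b * x) := by
    calc ∑ x : F, chi n (b * x)
        = ∑ x : F, chi n (b * (x + b⁻¹ * x₀)) :=
          (Fintype.sum_equiv (Equiv.addRight (b⁻¹ * x₀))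
            (fun x => chi n (b * (x + b⁻¹ * x₀))) (fun x => chi n (b * x))
            (fun x => rfl)).symm
      _ = ∑ x : F, chi n (b * x) * chi n x₀ := by
          refine Finset.sum_congr rfl fun x _ => ?_
          rw [mul_add, mul_inv_cancel_left₀ hb, chi_add hcard]
      _ = - ∑ x : F, chi n (b * x) := by
          rw [hchi]; simp [mul_neg, Finset.sum_neg_distrib]
  linarith
end Helpers2

section Helpers3
variable {n k : ℕ} {F : Type*} [Field F] [Fintype F] [DecidableEq F] [CharP F 2]

lemma chi_cases (x : F) : chi n x = 1 ∨ chi n x = -1 := by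
  unfold chi; split <;> simp

lemma chi_neg_one_iff (x : F) : chi n x = -1 ↔ absTr n x ≠ 0 := by
  unfold chi; split <;> simp_all

lemma adjoint (hcard : Fintype.card F = 2 ^ n) (hk : k ≤ n) (u c x : F) :
    absTr n (c * (u ^ 2 ^ k * x ^ 2 ^ (2 * k) + u * x))
      = absTr n ((u * c + u ^ 2 ^ (2 * n - k) * c ^ 2 ^ (2 * n - 2 * k)) * x) := by
  have e1 : (c * (u ^ 2 ^ k * x ^ 2 ^ (2 * k))) ^ 2 ^ (2 * n - 2 * k)
      = u ^ 2 ^ (2 * n - k) * c ^ 2 ^ (2 * n - 2 * k) * x := by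
    rw [mul_pow, mul_pow, ppow, ppow]
    have h1 : k + (2 * n - 2 * k) = 2 * n - k := by omega
    have h2 : 2 * k + (2 * n - 2 * k) = 2 * n := by omega
    rw [h1, h2, frob2n hcard]
    ring
  calc absTr n (c * (u ^ 2 ^ k * x ^ 2 ^ (2 * k) + u * x))
      = absTr n (c * (u ^ 2 ^ k * x ^ 2 ^ (2 * k))) + absTr n (c * (u * x)) := by
        rw [← absTr_add]; congr 1; ring
    _ = absTr n ((c * (u ^ 2 ^ k * x ^ 2 ^ (2 * k))) ^ 2 ^ (2 * n - 2 * k))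
          + absTr n (c * (u * x)) := by rw [absTr_frob hcard]
    _ = absTr n (u ^ 2 ^ (2 * n - k) * c ^ 2 ^ (2 * n - 2 * k) * x) + absTr n (u * c * x) := by
        rw [e1]; congr 2; ring
    _ = absTr n ((u * c + u ^ 2 ^ (2 * n - k) * c ^ 2 ^ (2 * n - 2 * k)) * x) := by
        rw [← absTr_add]; congr 1; ring

lemma fix_gcd : ∀ (a b : ℕ) (t : F), t ^ 2 ^ a = t → t ^ 2 ^ b = t →
    t ^ 2 ^ (Nat.gcd a b) = t := by
  intro a
  induction a using Nat.strong_induction_on with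
  | _ a ih =>
    intro b t ha hb
    rcases Nat.eq_zero_or_pos a with h0 | hpos
    · subst h0; simpa using hb
    · rw [Nat.gcd_rec]
      refine ih (b % a) (Nat.mod_lt b hpos) a t ?_ ha
      have h1 : t ^ 2 ^ (a * (b / a)) = t := fix_mul ha _
      have h2 : t ^ 2 ^ b = (t ^ 2 ^ (a * (b / a))) ^ 2 ^ (b % a) := by
        rw [ppow]
        congr 2
        exact (Nat.div_add_mod b a).symm
      rw [h1] at h2
      rw [← h2, hb]

lemma absTr_eq_zero_of_fix (e m : ℕ) (hm : n = e * m) (heven : Even m)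
    (t : F) (ht : t ^ 2 ^ e = t) : absTr n t = 0 := by
  have hblock : ∀ M : ℕ, ∑ i ∈ Finset.range (e * M), t ^ 2 ^ i
      = M • ∑ j ∈ Finset.range e, t ^ 2 ^ j := by
    intro M
    induction M with
    | zero => simp
    | succ M ih =>
        have hsplit : ∑ i ∈ Finset.range (e * (M + 1)), t ^ 2 ^ i
            = ∑ i ∈ Finset.range (e * M), t ^ 2 ^ i
              + ∑ i ∈ Finset.Ico (e * M) (e * M + e), t ^ 2 ^ i := by
          rw [Nat.mul_succ, Finset.range_eq_Ico, Finset.range_eq_Ico]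
          exact (Finset.sum_Ico_consecutive (fun i => t ^ 2 ^ i) (Nat.zero_le (e * M)) (Nat.le_add_right _ _)).symm
        have hsecond : ∑ i ∈ Finset.Ico (e * M) (e * M + e), t ^ 2 ^ i
            = ∑ j ∈ Finset.range e, t ^ 2 ^ j := by
          rw [Finset.sum_Ico_eq_sum_range]
          simp only [Nat.add_sub_cancel_left]
          refine Finset.sum_congr rfl fun j _ => ?_
          have : t ^ 2 ^ (e * M + j) = (t ^ 2 ^ (e * M)) ^ 2 ^ j := by rw [ppow]
          rw [this, fix_mul ht]
        rw [hsplit, ih, hsecond, succ_nsmul]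
  obtain ⟨c, hc⟩ := heven
  have : absTr n t = m • ∑ j ∈ Finset.range e, t ^ 2 ^ j := by
    unfold absTr; rw [hm, hblock]
  rw [this, hc, show c + c = 2 * c by ring, mul_nsmul, CharTwo.two_nsmul, smul_zero]

end Helpers3

section Final
variable {n k : ℕ} {F : Type*} [Field F] [Fintype F] [DecidableEq F] [CharP F 2]

lemma chi_adjoint (hcard : Fintype.card F = 2 ^ n) (hk : k ≤ n) (u c x : F) :
    chi n (c * (u ^ 2 ^ k * x ^ 2 ^ (2 * k) + u * x))
      = chi n ((u * c + u ^ 2 ^ (2 * n - k) * c ^ 2 ^ (2 * n - 2 * k)) * x) := by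
  unfold chi; rw [adjoint hcard hk]

lemma final_step (hcard : Fintype.card F = 2 ^ n) (hn : 0 < n) (hk : k ≤ n)
    {e : ℕ} (he : e = Nat.gcd k n) (heven : Even (n / e))
    (u v a : F) (hker : u ^ 2 ^ k * a ^ 2 ^ (2 * k) = u * a)
    (htra : absTr n (v * a) ≠ 0) :
    ∑ x : F, chi n (u * x ^ (2 ^ k + 1) + v * x) = 0 := by
  have hek : e ∣ n := he ▸ Nat.gcd_dvd_right k n
  have hem : n = e * (n / e) := (Nat.mul_div_cancel' hek).symm
  -- Step D : the constant term has trace 0 + nonzero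
  have hexp : (2 ^ k + 1) * 2 ^ k = 2 ^ (2 * k) + 2 ^ k := by
    rw [add_mul, one_mul, ← pow_add, two_mul]
  have htk : (u * a ^ (2 ^ k + 1)) ^ 2 ^ k = u * a ^ (2 ^ k + 1) := by
    calc (u * a ^ (2 ^ k + 1)) ^ 2 ^ k
        = u ^ 2 ^ k * a ^ ((2 ^ k + 1) * 2 ^ k) := by rw [mul_pow, ← pow_mul]
      _ = (u ^ 2 ^ k * a ^ 2 ^ (2 * k)) * a ^ 2 ^ k := by rw [hexp, pow_add]; ring
      _ = (u * a) * a ^ 2 ^ k := by rw [hker]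
      _ = u * a ^ (2 ^ k + 1) := by rw [pow_succ]; ring
  have htn : (u * a ^ (2 ^ k + 1)) ^ 2 ^ n = u * a ^ (2 ^ k + 1) := frobn hcard _
  have hte := fix_gcd k n _ htk htn
  rw [← he] at hte
  have htr0 : absTr n (u * a ^ (2 ^ k + 1)) = 0 :=
    absTr_eq_zero_of_fix e (n / e) hem heven _ hte
  have habs1 : absTr n (u * a ^ (2 ^ k + 1) + v * a) ≠ 0 := by
    rw [absTr_add, htr0, zero_add]; exact htra
  have hchia : chi n (u * a ^ (2 ^ k + 1) + v * a) = -1 := (chi_neg_one_iff _).mpr habs1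
  -- mixed term: M(a^{2^k}) = 0
  have hmadj : u * a ^ 2 ^ k + u ^ 2 ^ (2 * n - k) * (a ^ 2 ^ k) ^ 2 ^ (2 * n - 2 * k) = 0 := by
    have hr := congrArg (· ^ 2 ^ (2 * n - k)) hker
    rw [mul_pow, mul_pow, ppow, ppow,
      show k + (2 * n - k) = 2 * n by omega,
      show 2 * k + (2 * n - k) = k + 2 * n by omega,
      frob2n hcard, ← ppow, frob2n hcard] at hr
    -- hr : u * a ^ 2 ^ k = u ^ 2 ^ (2n-k) * a ^ 2 ^ (2n-k)
    have e3 : (a ^ 2 ^ k) ^ 2 ^ (2 * n - 2 * k) = a ^ 2 ^ (2 * n - k) := by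
      rw [ppow]; congr 2; omega
    rw [e3, ← hr]
    exact CharTwo.add_self_eq_zero _
  have hmix : ∀ x : F, absTr n (u * (a * x ^ 2 ^ k) + u * (a ^ 2 ^ k * x)) = 0 := by
    intro x
    have hfirst : absTr n (u * (a * x ^ 2 ^ k))
        = absTr n (u ^ 2 ^ k * a ^ 2 ^ k * x ^ 2 ^ (2 * k)) := by
      rw [← absTr_frob hcard k (u * (a * x ^ 2 ^ k))]
      congr 1
      rw [mul_pow, mul_pow, ppow, ← two_mul]
      ring
    calc absTr n (u * (a * x ^ 2 ^ k) + u * (a ^ 2 ^ k * x))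
        = absTr n (u * (a * x ^ 2 ^ k)) + absTr n (u * (a ^ 2 ^ k * x)) := absTr_add _ _
      _ = absTr n (u ^ 2 ^ k * a ^ 2 ^ k * x ^ 2 ^ (2 * k)) + absTr n (u * (a ^ 2 ^ k * x)) := by
          rw [hfirst]
      _ = absTr n (a ^ 2 ^ k * (u ^ 2 ^ k * x ^ 2 ^ (2 * k) + u * x)) := by
          rw [← absTr_add]; congr 1; ring
      _ = absTr n ((u * a ^ 2 ^ k + u ^ 2 ^ (2 * n - k) * (a ^ 2 ^ k) ^ 2 ^ (2 * n - 2 * k)) * x) :=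
          adjoint hcard hk u (a ^ 2 ^ k) x
      _ = 0 := by rw [hmadj, zero_mul, absTr_zero]
  have hbin : ∀ x : F, u * (x + a) ^ (2 ^ k + 1) + v * (x + a)
      = (u * x ^ (2 ^ k + 1) + v * x)
        + ((u * (a * x ^ 2 ^ k) + u * (a ^ 2 ^ k * x)) + (u * a ^ (2 ^ k + 1) + v * a)) := by
    intro x
    have hb : (x + a) ^ 2 ^ k = x ^ 2 ^ k + a ^ 2 ^ k := add_pow_char_pow x a 2 k
    simp only [pow_succ]
    rw [hb]; ring
  have hSS : ∑ x : F, chi n (u * x ^ (2 ^ k + 1) + v * x)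
      = - ∑ x : F, chi n (u * x ^ (2 ^ k + 1) + v * x) := by
    calc ∑ x : F, chi n (u * x ^ (2 ^ k + 1) + v * x)
        = ∑ x : F, chi n (u * (x + a) ^ (2 ^ k + 1) + v * (x + a)) :=
          (Fintype.sum_equiv (Equiv.addRight a)
            (fun x => chi n (u * (x + a) ^ (2 ^ k + 1) + v * (x + a)))
            (fun x => chi n (u * x ^ (2 ^ k + 1) + v * x)) (fun x => rfl)).symm
      _ = ∑ x : F, chi n (u * x ^ (2 ^ k + 1) + v * x)
            * (chi n (u * (a * x ^ 2 ^ k) + u * (a ^ 2 ^ k * x))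
               * chi n (u * a ^ (2 ^ k + 1) + v * a)) := by
          refine Finset.sum_congr rfl fun x _ => ?_
          rw [hbin x,
            chi_add hcard (u * x ^ (2 ^ k + 1) + v * x) _,
            chi_add hcard (u * (a * x ^ 2 ^ k) + u * (a ^ 2 ^ k * x)) _]
      _ = ∑ x : F, chi n (u * x ^ (2 ^ k + 1) + v * x) * (1 * (-1)) := by
          refine Finset.sum_congr rfl fun x _ => ?_
          rw [hchia, show chi n (u * (a * x ^ 2 ^ k) + u * (a ^ 2 ^ k * x)) = 1 from by
            unfold chi; rw [hmix x]; simp]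
      _ = - ∑ x : F, chi n (u * x ^ (2 ^ k + 1) + v * x) := by
          simp [mul_neg, mul_one, Finset.sum_neg_distrib]
  linarith
end Final

/-- If `n/e` is even (`e = gcd(k,n)`), `u, v ≠ 0`, `u` is a `(2^e+1)`-th power, and
`L_u(x) = v^{2^k}` has no solution, then the Weil sum `S(u,v)` vanishes. -/
theorem weil_sum_gold_even_pow_unsolvable (n k e : ℕ) (hk1 : 1 ≤ k) (hkn : k < n)
    (he : e = Nat.gcd k n) (heven : Even (n / e))
    {F : Type*} [Field F] [Fintype F] [DecidableEq F] [CharP F 2]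
    (hcard : Fintype.card F = 2 ^ n)
    (u v : F) (hu : u ≠ 0) (hv : v ≠ 0)
    (hpow : ∃ w : F, w ≠ 0 ∧ w ^ (2 ^ e + 1) = u)
    (hsol : ¬ ∃ x : F, u ^ (2 ^ k) * x ^ (2 ^ (2 * k)) + u * x = v ^ (2 ^ k)) :
    ∑ x : F, chi n (u * x ^ (2 ^ k + 1) + v * x) = 0 := by
  have hn : 0 < n := by omega
  have hk : k ≤ n := hkn.le
  have h2 : (2 : F) = 0 := by exact_mod_cast CharP.cast_eq_zero F 2
  -- no solution means the affine expression is never zero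
  have hLne : ∀ x : F, u ^ 2 ^ k * x ^ 2 ^ (2 * k) + u * x + v ^ 2 ^ k ≠ 0 := by
    intro x hx
    exact hsol ⟨x, by linear_combination hx - v ^ 2 ^ k * h2⟩
  -- double counting
  have hzero : (0 : ℤ) = ∑ c : F, chi n (c * v ^ 2 ^ k)
      * ∑ x : F, chi n ((u * c + u ^ 2 ^ (2 * n - k) * c ^ 2 ^ (2 * n - 2 * k)) * x) := by
    calc (0 : ℤ)
        = ∑ x : F, ∑ c : F,
            chi n ((u ^ 2 ^ k * x ^ 2 ^ (2 * k) + u * x + v ^ 2 ^ k) * c) := by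
          symm; exact Finset.sum_eq_zero fun x _ => sum_chi_eq_zero hn hcard (hLne x)
      _ = ∑ c : F, ∑ x : F,
            chi n ((u ^ 2 ^ k * x ^ 2 ^ (2 * k) + u * x + v ^ 2 ^ k) * c) := Finset.sum_comm
      _ = ∑ c : F, ∑ x : F,
            chi n ((u * c + u ^ 2 ^ (2 * n - k) * c ^ 2 ^ (2 * n - 2 * k)) * x)
              * chi n (c * v ^ 2 ^ k) := by
          refine Finset.sum_congr rfl fun c _ => Finset.sum_congr rfl fun x _ => ?_
          have e1 : (u ^ 2 ^ k * x ^ 2 ^ (2 * k) + u * x + v ^ 2 ^ k) * c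
              = c * (u ^ 2 ^ k * x ^ 2 ^ (2 * k) + u * x) + c * v ^ 2 ^ k := by ring
          rw [e1, chi_add hcard, chi_adjoint hcard hk]
      _ = ∑ c : F, chi n (c * v ^ 2 ^ k)
            * ∑ x : F, chi n ((u * c + u ^ 2 ^ (2 * n - k) * c ^ 2 ^ (2 * n - 2 * k)) * x) := by
          refine Finset.sum_congr rfl fun c _ => ?_
          rw [Finset.mul_sum]
          exact Finset.sum_congr rfl fun x _ => mul_comm _ _
  have hinner : ∀ c : F,
      (∑ x : F, chi n ((u * c + u ^ 2 ^ (2 * n - k) * c ^ 2 ^ (2 * n - 2 * k)) * x))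
        = if u * c + u ^ 2 ^ (2 * n - k) * c ^ 2 ^ (2 * n - 2 * k) = 0 then (2 : ℤ) ^ n
          else 0 := by
    intro c
    split_ifs with hc
    · calc ∑ x : F, chi n ((u * c + u ^ 2 ^ (2 * n - k) * c ^ 2 ^ (2 * n - 2 * k)) * x)
          = ∑ _x : F, (1 : ℤ) := by
            refine Finset.sum_congr rfl fun x _ => ?_; rw [hc, zero_mul, chi_zero]
        _ = (Fintype.card F : ℤ) := by rw [Finset.sum_const, Finset.card_univ]; simp
        _ = (2 : ℤ) ^ n := by rw [hcard]; push_cast; ring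
    · exact sum_chi_eq_zero hn hcard hc
  have hfs : ∑ c ∈ Finset.univ.filter
        (fun c : F => u * c + u ^ 2 ^ (2 * n - k) * c ^ 2 ^ (2 * n - 2 * k) = 0),
      chi n (c * v ^ 2 ^ k) = 0 := by
    have h1 : (0 : ℤ) = ∑ c : F,
        (if u * c + u ^ 2 ^ (2 * n - k) * c ^ 2 ^ (2 * n - 2 * k) = 0
          then chi n (c * v ^ 2 ^ k) * 2 ^ n else 0) := by
      refine hzero.trans (Finset.sum_congr rfl fun c _ => ?_)
      rw [hinner c, mul_ite, mul_zero]
    rw [← Finset.sum_filter, ← Finset.sum_mul] at h1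
    rcases mul_eq_zero.mp h1.symm with h | h
    · exact h
    · exact absurd h (by positivity)
  have hex : ∃ c : F, (u * c + u ^ 2 ^ (2 * n - k) * c ^ 2 ^ (2 * n - 2 * k) = 0)
      ∧ chi n (c * v ^ 2 ^ k) = -1 := by
    by_contra hcon
    push_neg at hcon
    have hall : ∀ c ∈ Finset.univ.filter
        (fun c : F => u * c + u ^ 2 ^ (2 * n - k) * c ^ 2 ^ (2 * n - 2 * k) = 0),
        chi n (c * v ^ 2 ^ k) = 1 := by
      intro c hc
      rcases chi_cases (n := n) (c * v ^ 2 ^ k) with h | h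
      · exact h
      · exact absurd h (hcon c (Finset.mem_filter.mp hc).2)
    have hmem : (0 : F) ∈ Finset.univ.filter
        (fun c : F => u * c + u ^ 2 ^ (2 * n - k) * c ^ 2 ^ (2 * n - 2 * k) = 0) := by
      refine Finset.mem_filter.mpr ⟨Finset.mem_univ _, ?_⟩
      have hz : (0 : F) ^ 2 ^ (2 * n - 2 * k) = 0 := zero_pow (by positivity)
      rw [hz]; ring
    have hcard' : ((Finset.univ.filter
        (fun c : F => u * c + u ^ 2 ^ (2 * n - k) * c ^ 2 ^ (2 * n - 2 * k) = 0)).card : ℤ)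
          = 0 := by
      rw [← hfs, Finset.sum_congr rfl hall]; simp
    have : (Finset.univ.filter
        (fun c : F => u * c + u ^ 2 ^ (2 * n - k) * c ^ 2 ^ (2 * n - 2 * k) = 0)).card ≠ 0 :=
      Finset.card_ne_zero_of_mem hmem
    exact this (by exact_mod_cast hcard')
  obtain ⟨c, hc0, hcchi⟩ := hex
  have hmc : u * c = u ^ 2 ^ (2 * n - k) * c ^ 2 ^ (2 * n - 2 * k) := by
    linear_combination hc0 - u ^ 2 ^ (2 * n - k) * c ^ 2 ^ (2 * n - 2 * k) * h2
  have hker : u ^ 2 ^ k * (c ^ 2 ^ (2 * n - k)) ^ 2 ^ (2 * k) = u * c ^ 2 ^ (2 * n - k) := by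
    have hr := congrArg (· ^ 2 ^ k) hmc
    rw [mul_pow, mul_pow, ppow, ppow,
      show 2 * n - k + k = 2 * n by omega,
      show 2 * n - 2 * k + k = 2 * n - k by omega, frob2n hcard] at hr
    have e3 : (c ^ 2 ^ (2 * n - k)) ^ 2 ^ (2 * k) = c ^ 2 ^ k := by
      rw [ppow, show 2 * n - k + 2 * k = k + 2 * n by omega, ← ppow, frob2n hcard]
    rw [e3, hr]
  have htra : absTr n (v * c ^ 2 ^ (2 * n - k)) ≠ 0 := by
    have h1 : absTr n (c * v ^ 2 ^ k) ≠ 0 := (chi_neg_one_iff _).mp hcchi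
    have h2' : absTr n ((c * v ^ 2 ^ k) ^ 2 ^ (2 * n - k)) = absTr n (c * v ^ 2 ^ k) :=
      absTr_frob hcard _ _
    have e4 : (c * v ^ 2 ^ k) ^ 2 ^ (2 * n - k) = v * c ^ 2 ^ (2 * n - k) := by
      rw [mul_pow, ppow, show k + (2 * n - k) = 2 * n by omega, frob2n hcard]; ring
    rw [e4] at h2'
    rw [h2']; exact h1
  exact final_step hcard hn hk he heven u v (c ^ 2 ^ (2 * n - k)) hker htra
end

section
/- Let n, k be positive integers with 1 ≤ k < n and e = gcd(k, n). For u ∈ F_q, one has Tr_e(u · (β^{2^{n−k}} + β)) = 0 for all β ∈ F_q if and only if u^{2^k} = u (equivalently, if and only if u belongs to the subfield F_{2^e}). -/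
def relTr (n e : ℕ) {F : Type*} [Field F] (x : F) : F :=
  ∑ i ∈ Finset.range (n / e), x ^ (2 ^ (e * i))

section
variable {F : Type*} [Field F] [CharP F 2]

lemma relTr_add (n e : ℕ) (a b : F) :
    relTr n e (a + b) = relTr n e a + relTr n e b := by
  haveI : Fact (Nat.Prime 2) := ⟨Nat.prime_two⟩
  unfold relTr
  rw [← Finset.sum_add_distrib]
  exact Finset.sum_congr rfl fun i _ => add_pow_char_pow a b 2 (e * i)

omit [CharP F 2] in
lemma relTr_frob (n e : ℕ) (hen : e * (n / e) = n)
    (hfn : ∀ x : F, x ^ (2 ^ n) = x) (x : F) :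
    relTr n e (x ^ (2 ^ e)) = relTr n e x := by
  set N := n / e with hNdef
  have hterm : ∀ i : ℕ, (x ^ (2 ^ e)) ^ (2 ^ (e * i)) = x ^ (2 ^ (e * (i + 1))) := by
    intro i
    rw [← pow_mul, ← pow_add]
    ring_nf
  have key : (∑ i ∈ Finset.range N, x ^ (2 ^ (e * (i + 1)))) + x ^ (2 ^ (e * 0))
      = (∑ i ∈ Finset.range N, x ^ (2 ^ (e * i))) + x ^ (2 ^ (e * N)) := by
    rw [← Finset.sum_range_succ' (fun i => x ^ (2 ^ (e * i))) N,
      Finset.sum_range_succ]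
  have h0 : x ^ (2 ^ (e * 0)) = x := by simp
  have hNx : x ^ (2 ^ (e * N)) = x := by rw [hen]; exact hfn x
  unfold relTr
  rw [← hNdef]
  calc (∑ i ∈ Finset.range N, (x ^ (2 ^ e)) ^ (2 ^ (e * i)))
      = ∑ i ∈ Finset.range N, x ^ (2 ^ (e * (i + 1))) :=
        Finset.sum_congr rfl fun i _ => hterm i
    _ = ∑ i ∈ Finset.range N, x ^ (2 ^ (e * i)) := by
        have := key
        rw [h0, hNx] at this
        exact add_right_cancel this

omit [CharP F 2] in
lemma relTr_frob_pow (n e : ℕ) (hen : e * (n / e) = n)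
    (hfn : ∀ x : F, x ^ (2 ^ n) = x) (m : ℕ) (x : F) :
    relTr n e (x ^ (2 ^ (e * m))) = relTr n e x := by
  induction m with
  | zero => simp
  | succ m ih =>
    have : x ^ (2 ^ (e * (m + 1))) = (x ^ (2 ^ (e * m))) ^ (2 ^ e) := by
      rw [← pow_mul, ← pow_add]
      ring_nf
    rw [this, relTr_frob n e hen hfn, ih]

end

/-- For `u` in the field `F` with `2^n` elements (`e = gcd(k,n)`):
`Tr_e(u (β^{2^{n−k}} + β)) = 0` for all `β` if and only if `u^{2^k} = u`. -/
theorem relTr_orthogonal_iff (n k e : ℕ) (hk1 : 1 ≤ k) (hkn : k < n)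
    (he : e = Nat.gcd k n)
    {F : Type*} [Field F] [Fintype F] [DecidableEq F] [CharP F 2]
    (hcard : Fintype.card F = 2 ^ n) :
    ∀ u : F,
      (∀ β : F, relTr n e (u * (β ^ (2 ^ (n - k)) + β)) = 0) ↔ u ^ (2 ^ k) = u := by
  have hn : 0 < n := lt_trans (lt_of_lt_of_le zero_lt_one hk1) hkn
  have he1 : 1 ≤ e := by
    rw [he]; exact Nat.gcd_pos_of_pos_left n hk1
  have hedn : e ∣ n := he ▸ Nat.gcd_dvd_right k n
  have hedk : e ∣ k := he ▸ Nat.gcd_dvd_left k n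
  have hen : e * (n / e) = n := Nat.mul_div_cancel' hedn
  have hfn : ∀ x : F, x ^ (2 ^ n) = x := by
    intro x
    rw [← hcard]; exact FiniteField.pow_card x
  set N := n / e with hNdef
  have hN1 : 1 ≤ N := Nat.div_pos (Nat.le_of_dvd hn hedn) (lt_of_lt_of_le zero_lt_one he1)
  -- key identity: relTr (u * β^(2^(n-k))) = relTr (u^(2^k) * β)
  have hkey : ∀ u β : F, relTr n e (u * β ^ (2 ^ (n - k))) = relTr n e (u ^ (2 ^ k) * β) := by
    intro u β
    obtain ⟨m, hm⟩ := hedk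
    have h1 : (u * β ^ (2 ^ (n - k))) ^ (2 ^ (e * m)) = u ^ (2 ^ k) * β := by
      rw [← hm, mul_pow, ← pow_mul, ← pow_add, Nat.sub_add_cancel (le_of_lt hkn), hfn]
    rw [← h1, relTr_frob_pow n e hen hfn]
  -- nondegeneracy: there exists x with relTr x ≠ 0
  have hexists : ∃ x : F, relTr n e x ≠ 0 := by
    set P : Polynomial F := ∑ i ∈ Finset.range N, Polynomial.X ^ (2 ^ (e * i)) with hP
    have heval : ∀ x : F, P.eval x = relTr n e x := by
      intro x
      simp [hP, Polynomial.eval_finset_sum, relTr, ← hNdef]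
    have hP0 : P ≠ 0 := by
      intro h
      have hc : P.coeff 1 = 1 := by
        rw [hP, Polynomial.finset_sum_coeff]
        rw [Finset.sum_eq_single_of_mem 0 (Finset.mem_range.2 (lt_of_lt_of_le zero_lt_one hN1))]
        · simp
        · intro i _ hi
          rw [Polynomial.coeff_X_pow]
          have : 1 < 2 ^ (e * i) := Nat.one_lt_two_pow_iff.2 (by positivity)
          simp [Nat.ne_of_lt this]
      rw [h] at hc
      simp at hc
    have hdeg : P.natDegree ≤ 2 ^ (e * (N - 1)) := by
      apply Polynomial.natDegree_sum_le_of_forall_le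
      intro i hi
      rw [Polynomial.natDegree_X_pow]
      exact Nat.pow_le_pow_right (by norm_num)
        (Nat.mul_le_mul_left e (Nat.le_sub_one_of_lt (Finset.mem_range.1 hi)))
    have hdeg2 : P.natDegree < 2 ^ n := by
      refine lt_of_le_of_lt hdeg (Nat.pow_lt_pow_right one_lt_two ?_)
      calc e * (N - 1) < e * N :=
            mul_lt_mul_of_pos_left (Nat.sub_lt hN1 one_pos) (lt_of_lt_of_le zero_lt_one he1)
        _ = n := hen
    obtain ⟨x, hx⟩ := Polynomial.exists_eval_ne_zero_of_natDegree_lt_card P hP0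
      (by rw [Cardinal.mk_fintype, hcard]; exact_mod_cast hdeg2)
    exact ⟨x, by rwa [heval] at hx⟩
  intro u
  constructor
  · intro h
    by_contra hne
    have hc : u ^ (2 ^ k) + u ≠ 0 := by
      intro h0
      have h2 : u ^ (2 ^ k) = u := by
        have : u ^ (2 ^ k) + u + u = 0 + u := by rw [h0]
        rwa [add_assoc, CharTwo.add_self_eq_zero, add_zero, zero_add] at this
      exact hne h2
    have hzero : ∀ x : F, relTr n e x = 0 := by
      intro x
      have hβ := h ((u ^ (2 ^ k) + u)⁻¹ * x)
      set β := (u ^ (2 ^ k) + u)⁻¹ * x with hβdef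
      rw [mul_add, relTr_add, hkey] at hβ
      rw [← relTr_add, ← add_mul] at hβ
      rwa [hβdef, ← mul_assoc, mul_inv_cancel₀ hc, one_mul] at hβ
    obtain ⟨x, hx⟩ := hexists
    exact hx (hzero x)
  · intro hu β
    rw [mul_add, relTr_add, hkey, hu, ← relTr_add, CharTwo.add_self_eq_zero]
    have h2 : ∀ i : ℕ, (0 : F) ^ (2 ^ (e * i)) = 0 :=
      fun i => zero_pow (by positivity)
    simp [relTr, h2]
end

section
/- Let n ≥ 2 and 1 ≤ k < n with e = gcd(k, n), and suppose n/e is odd. Then the boomerang uniformity of the Gold function F(x) = x^{2^k+1} over F_q equals 2^e; that is, for all a, b ∈ F_q^* the number of pairs (x, y) ∈ F_q × F_q with x^{2^k+1} + y^{2^k+1} = b and (x+a)^{2^k+1} + (y+a)^{2^k+1} = b is at most 2^e, and this value 2^e is attained for some a, b ∈ F_q^*. -/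
open Polynomial Finset

set_option linter.unusedSectionVars false

namespace GoldAux

variable {F : Type*} [Field F] [CharP F 2]

lemma frob_add (m : ℕ) (x y : F) : (x + y) ^ 2 ^ m = x ^ 2 ^ m + y ^ 2 ^ m :=
  add_pow_char_pow x y 2 m

lemma frob_inj (m : ℕ) {x y : F} (h : x ^ 2 ^ m = y ^ 2 ^ m) : x = y := by
  have h2 : (x + y) ^ 2 ^ m = 0 := by
    rw [frob_add, h, CharTwo.add_self_eq_zero]
  have h3 : x + y = 0 := pow_eq_zero_iff (by positivity) |>.mp h2
  linear_combination h3 - CharTwo.add_self_eq_zero y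

lemma fix_mul {t : F} {a : ℕ} (h : t ^ 2 ^ a = t) (b : ℕ) : t ^ 2 ^ (a * b) = t := by
  induction b with
  | zero => simp
  | succ b ih => rw [Nat.mul_succ, pow_add, pow_mul, ih, h]

lemma fix_dvd {t : F} {a b : ℕ} (hab : a ∣ b) (h : t ^ 2 ^ a = t) : t ^ 2 ^ b = t := by
  obtain ⟨c, rfl⟩ := hab
  exact fix_mul h c

lemma fix_gcd (t : F) (a b : ℕ) : t ^ 2 ^ a = t → t ^ 2 ^ b = t → t ^ 2 ^ Nat.gcd a b = t := by
  induction a, b using Nat.gcd.induction with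
  | H0 n => intro _ h2; simpa using h2
  | H1 m n hm ih =>
    intro h1 h2
    rw [Nat.gcd_rec]
    apply ih ?_ h1
    -- t ^ 2 ^ (n % m) = t
    have h3 : (t ^ 2 ^ (n % m)) ^ 2 ^ (m * (n / m)) = t := by
      rw [← pow_mul, ← pow_add]
      have : n % m + m * (n / m) = n := by
        rw [Nat.add_comm]; exact Nat.div_add_mod n m
      rw [this]; exact h2
    have h4 : t ^ 2 ^ (m * (n / m)) = t := fix_mul h1 _
    exact frob_inj _ (h3.trans h4.symm)


lemma card_fix [Fintype F] [DecidableEq F] {n e : ℕ} (hcard : Fintype.card F = 2 ^ n)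
    (hen : e ∣ n) (he1 : 1 ≤ e) :
    (Finset.univ.filter fun t : F => t ^ 2 ^ e = t).card = 2 ^ e := by
  classical
  set p : F[X] := X ^ 2 ^ e - X with hp
  have h2e : 1 < 2 ^ e := Nat.one_lt_two_pow_iff.mpr (by omega)
  have hdeg : p.natDegree = 2 ^ e := by
    rw [hp]
    compute_degree
    · rw [if_neg (by omega)]; simp
    · omega
  have hp0 : p ≠ 0 := by
    intro h
    rw [h] at hdeg
    simp only [Polynomial.natDegree_zero] at hdeg
    omega
  -- the big polynomial
  set q : F[X] := X ^ 2 ^ n - X with hq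
  have hqroots : q.roots = Finset.univ.val := by
    rw [hq, ← hcard]; exact FiniteField.roots_X_pow_card_sub_X F
  have h2n : 1 < 2 ^ n := by rw [← hcard]; exact Fintype.one_lt_card
  have hqdeg : q.natDegree = 2 ^ n := by
    rw [hq]
    compute_degree
    · rw [if_neg (by omega)]; simp
    · omega
  have hq0 : q ≠ 0 := by
    intro h
    rw [h] at hqdeg
    simp only [Polynomial.natDegree_zero] at hqdeg
    omega
  have hqsplits : Splits q := by
    rw [splits_iff_card_roots, hqroots, hqdeg]
    simpa using hcard
  -- divisibility
  have hdvd : p ∣ q := by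
    have h1 : (2:ℕ) ^ e - 1 ∣ 2 ^ n - 1 := by
      obtain ⟨c, hc⟩ := hen
      have := Nat.sub_dvd_pow_sub_pow (2 ^ e) 1 c
      rw [one_pow, ← pow_mul, ← hc] at this
      exact this
    have h2 : (X : F[X]) ^ (2 ^ e - 1) - 1 ∣ X ^ (2 ^ n - 1) - 1 := by
      obtain ⟨c, hc⟩ := h1
      have := sub_dvd_pow_sub_pow ((X : F[X]) ^ (2 ^ e - 1)) 1 c
      rw [one_pow, ← pow_mul, ← hc] at this
      exact this
    have hfac : ∀ m : ℕ, 1 ≤ m → (X : F[X]) ^ m - X = X * (X ^ (m - 1) - 1) := by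
      intro m hm
      rw [mul_sub, mul_one, ← pow_succ']
      congr 2
      omega
    rw [hp, hq, hfac _ (by omega), hfac _ (by omega)]
    exact mul_dvd_mul_left X h2
  have hpsplits : Splits p := hqsplits.of_dvd hq0 hdvd
  have hproots : Multiset.card p.roots = 2 ^ e := by
    rw [splits_iff_card_roots.mp hpsplits, hdeg]
  have hsep : p.Separable := by
    have hder : derivative p = -1 := by
      rw [hp, derivative_sub, derivative_X_pow, derivative_X]
      have : ((2 ^ e : ℕ) : F) = 0 := by
        have : ((2 : ℕ) : F) = 0 := by exact_mod_cast CharTwo.two_eq_zero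
        rw [Nat.cast_pow, this, zero_pow (by omega)]
      rw [this]
      simp
    rw [Polynomial.separable_def, hder]
    exact (isCoprime_one_right).neg_right
  have hnodup : p.roots.Nodup := nodup_roots hsep
  have hset : (Finset.univ.filter fun t : F => t ^ 2 ^ e = t) = p.roots.toFinset := by
    ext t
    rw [Multiset.mem_toFinset, mem_roots hp0]
    simp only [mem_filter, mem_univ, true_and, Multiset.mem_toFinset, mem_roots hp0,
      IsRoot.def, hp, eval_sub, eval_pow, eval_X, sub_eq_zero]
  rw [hset, Multiset.toFinset_card_of_nodup hnodup, hproots]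



lemma no_one [Fintype F] {n k e : ℕ} (hcard : Fintype.card F = 2 ^ n)
    (hek : e ∣ k) (hen : e ∣ n) (he1 : 1 ≤ e) (hodd : Odd (n / e)) (w : F) :
    w ^ 2 ^ k + w ≠ 1 := by
  intro hw
  set m := n / e with hm
  have hxn : ∀ x : F, x ^ 2 ^ n = x := fun x => by rw [← hcard]; exact FiniteField.pow_card x
  have hnkm : n ∣ k * m := by
    obtain ⟨c, hc⟩ := hek
    have hne : e * m = n := Nat.mul_div_cancel' hen
    refine ⟨c, ?_⟩
    rw [hc, ← hne]
    ring
  have hfm : w ^ 2 ^ (k * m) = w := fix_dvd hnkm (hxn w)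
  set f : ℕ → F := fun i => w ^ 2 ^ (k * i) with hf
  have hterm : ∀ i, f (i + 1) - f i = (1 : F) := by
    intro i
    rw [CharTwo.sub_eq_add]
    have h1 : (w ^ 2 ^ k + w) ^ 2 ^ (k * i) = w ^ 2 ^ (k * (i + 1)) + w ^ 2 ^ (k * i) := by
      rw [frob_add, ← pow_mul, ← pow_add]
      congr 2
      ring
    rw [hf]
    simp only []
    rw [← h1, hw, one_pow]
  have hsum := Finset.sum_range_sub f m
  rw [Finset.sum_congr rfl (fun i _ => hterm i)] at hsum
  rw [Finset.sum_const, card_range, nsmul_eq_mul, mul_one] at hsum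
  have hf0 : f 0 = w := by simp [hf]
  have hfm' : f m = w := by rw [hf]; exact hfm
  rw [hf0, hfm', sub_self] at hsum
  have hmcast : ((m : ℕ) : F) = 1 := by
    obtain ⟨j, hj⟩ := hodd
    rw [hj]
    push_cast
    rw [CharTwo.two_eq_zero]
    ring
  rw [hmcast] at hsum
  exact one_ne_zero hsum

lemma expand {k : ℕ} {a t x : F} (ht : t ^ 2 ^ k = t) :
    (x + a * t) ^ (2 ^ k + 1) =
      x ^ (2 ^ k + 1) + t * (a * x ^ 2 ^ k + a ^ 2 ^ k * x) + t ^ 2 * a ^ (2 ^ k + 1) := by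
  have h1 : (x + a * t) ^ 2 ^ k = x ^ 2 ^ k + a ^ 2 ^ k * t := by
    rw [frob_add, mul_pow, ht]
  rw [pow_succ, pow_succ, pow_succ, h1]
  ring

lemma ker_char {k : ℕ} {a z : F} (ha : a ≠ 0) (h : a * z ^ 2 ^ k + a ^ 2 ^ k * z = 0) :
    (z * a⁻¹) ^ 2 ^ k = z * a⁻¹ := by
  have hak : (a : F) ^ 2 ^ k ≠ 0 := pow_ne_zero _ ha
  rw [mul_pow, inv_pow]
  field_simp
  linear_combination h - z * a ^ 2 ^ k * (CharTwo.two_eq_zero (R := F))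


/-- The linearized part of the derivative of the Gold function. -/
def goldL (k : ℕ) (a x : F) : F := a * x ^ 2 ^ k + a ^ 2 ^ k * x

lemma goldL_add (k : ℕ) (a x y : F) :
    goldL k a (x + y) = goldL k a x + goldL k a y := by
  unfold goldL
  rw [frob_add]
  ring

lemma goldL_smul (k : ℕ) (a x : F) {t : F} (ht : t ^ 2 ^ k = t) :
    goldL k a (t * x) = t * goldL k a x := by
  unfold goldL
  rw [mul_pow, ht]
  ring

lemma unique_t [Fintype F] {n k e : ℕ} (hcard : Fintype.card F = 2 ^ n)
    (hek : e ∣ k) (hen : e ∣ n) (he1 : 1 ≤ e) (hodd : Odd (n / e))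
    {a b t x t' x' : F} (ha : a ≠ 0)
    (ht : t ^ 2 ^ k = t) (htne : t ≠ 0) (ht' : t' ^ 2 ^ k = t') (htne' : t' ≠ 0)
    (hx : t * (a * x ^ 2 ^ k + a ^ 2 ^ k * x) + t ^ 2 * a ^ (2 ^ k + 1) = b)
    (hx' : t' * (a * x' ^ 2 ^ k + a ^ 2 ^ k * x') + t' ^ 2 * a ^ (2 ^ k + 1) = b) :
    t = t' := by
  by_contra hne
  have htwo : (2 : F) = 0 := CharTwo.two_eq_zero
  have hti : (t⁻¹) ^ 2 ^ k = t⁻¹ := by rw [inv_pow, ht]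
  have hti' : (t'⁻¹) ^ 2 ^ k = t'⁻¹ := by rw [inv_pow, ht']
  -- value of goldL on x and x'
  have hLx : goldL k a x = b * t⁻¹ + t * a ^ (2 ^ k + 1) := by
    unfold goldL
    field_simp
    linear_combination hx - t ^ 2 * a ^ (2 ^ k + 1) * htwo
  have hLx' : goldL k a x' = b * t'⁻¹ + t' * a ^ (2 ^ k + 1) := by
    unfold goldL
    field_simp
    linear_combination hx' - t' ^ 2 * a ^ (2 ^ k + 1) * htwo
  have h1 : goldL k a (t⁻¹ * x) = b * t⁻¹ ^ 2 + a ^ (2 ^ k + 1) := by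
    rw [goldL_smul k a x hti, hLx]
    field_simp
  have h1' : goldL k a (t'⁻¹ * x') = b * t'⁻¹ ^ 2 + a ^ (2 ^ k + 1) := by
    rw [goldL_smul k a x' hti', hLx']
    field_simp
  set c : F := t⁻¹ + t'⁻¹ with hc
  have hcne : c ≠ 0 := by
    intro h
    apply hne
    have h2 : t⁻¹ = t'⁻¹ := by
      rw [hc, ← CharTwo.sub_eq_add] at h
      exact sub_eq_zero.mp h
    exact inv_injective h2
  have hcK : c ^ 2 ^ k = c := by rw [hc, frob_add, hti, hti']
  have hc2K : (c ^ 2) ^ 2 ^ k = c ^ 2 := by rw [← pow_mul, mul_comm, pow_mul, hcK]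
  have hdK : ((c ^ 2)⁻¹) ^ 2 ^ k = (c ^ 2)⁻¹ := by rw [inv_pow, hc2K]
  have h3 : goldL k a (t⁻¹ * x + t'⁻¹ * x') = b * c ^ 2 := by
    rw [goldL_add, h1, h1', hc]
    linear_combination (a ^ (2 ^ k + 1) - b * t⁻¹ * t'⁻¹) * htwo
  have h4 : goldL k a ((c ^ 2)⁻¹ * (t⁻¹ * x + t'⁻¹ * x')) = b := by
    rw [goldL_smul _ _ _ hdK, h3]
    field_simp
  set u : F := (c ^ 2)⁻¹ * (t⁻¹ * x + t'⁻¹ * x') with hu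
  have hsqK : ((t⁻¹) ^ 2) ^ 2 ^ k = (t⁻¹) ^ 2 := by rw [← pow_mul, mul_comm, pow_mul, hti]
  have h5 : goldL k a (t⁻¹ * x + (t⁻¹) ^ 2 * u) = a ^ (2 ^ k + 1) := by
    rw [goldL_add, h1, goldL_smul _ _ _ hsqK, h4]
    linear_combination (b * t⁻¹ ^ 2) * htwo
  set v : F := t⁻¹ * x + (t⁻¹) ^ 2 * u with hv
  have h6 : (v * a⁻¹) ^ 2 ^ k + v * a⁻¹ = 1 := by
    have h5' : a * v ^ 2 ^ k + a ^ 2 ^ k * v = a ^ (2 ^ k + 1) := h5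
    have hak : (a : F) ^ 2 ^ k ≠ 0 := pow_ne_zero _ ha
    rw [mul_pow, inv_pow]
    field_simp
    linear_combination h5'
  exact no_one hcard hek hen he1 hodd _ h6

end GoldAux

open GoldAux in
/-- If `n/e` is odd (`e = gcd(k,n)`), the boomerang uniformity of the Gold function
`x^{2^k+1}` over the field `F` with `2^n` elements equals `2^e`: every BCT entry at
`(a,b)` with `a, b ≠ 0` is at most `2^e`, and this bound is attained. -/
theorem gold_boomerang_uniformity_odd (n k e : ℕ) (hn : 2 ≤ n) (hk1 : 1 ≤ k) (hkn : k < n)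
    (he : e = Nat.gcd k n) (hodd : Odd (n / e))
    {F : Type*} [Field F] [Fintype F] [DecidableEq F] [CharP F 2]
    (hcard : Fintype.card F = 2 ^ n) :
    (∀ a b : F, a ≠ 0 → b ≠ 0 →
        (Finset.univ.filter fun p : F × F =>
            p.1 ^ (2 ^ k + 1) + p.2 ^ (2 ^ k + 1) = b ∧
            (p.1 + a) ^ (2 ^ k + 1) + (p.2 + a) ^ (2 ^ k + 1) = b).card ≤ 2 ^ e) ∧
    (∃ a b : F, a ≠ 0 ∧ b ≠ 0 ∧
        (Finset.univ.filter fun p : F × F =>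
            p.1 ^ (2 ^ k + 1) + p.2 ^ (2 ^ k + 1) = b ∧
            (p.1 + a) ^ (2 ^ k + 1) + (p.2 + a) ^ (2 ^ k + 1) = b).card = 2 ^ e) := by

  classical
  have htwo : (2 : F) = 0 := CharTwo.two_eq_zero
  have hek : e ∣ k := he ▸ Nat.gcd_dvd_left k n
  have hen : e ∣ n := he ▸ Nat.gcd_dvd_right k n
  have he1 : 1 ≤ e := he ▸ Nat.gcd_pos_of_pos_left n hk1
  have hxn : ∀ x : F, x ^ 2 ^ n = x := fun x => by rw [← hcard]; exact FiniteField.pow_card x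
  have hKcard : (Finset.univ.filter fun t : F => t ^ 2 ^ k = t).card = 2 ^ e := by
    have hKe : (Finset.univ.filter fun t : F => t ^ 2 ^ k = t)
        = (Finset.univ.filter fun t : F => t ^ 2 ^ e = t) := by
      ext t
      simp only [Finset.mem_filter, Finset.mem_univ, true_and]
      constructor
      · intro h; rw [he]; exact fix_gcd t k n h (hxn t)
      · intro h; exact fix_dvd hek h
    rw [hKe]; exact card_fix hcard hen he1
  have hbound : ∀ a b : F, a ≠ 0 → b ≠ 0 →
      (Finset.univ.filter fun p : F × F =>
          p.1 ^ (2 ^ k + 1) + p.2 ^ (2 ^ k + 1) = b ∧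
          (p.1 + a) ^ (2 ^ k + 1) + (p.2 + a) ^ (2 ^ k + 1) = b).card ≤ 2 ^ e := by
    intro a b ha hb
    set T : Finset (F × F) := Finset.univ.filter fun q : F × F =>
        q.1 ^ 2 ^ k = q.1 ∧ q.1 ≠ 0 ∧
        q.1 * (a * q.2 ^ 2 ^ k + a ^ 2 ^ k * q.2) + q.1 ^ 2 * a ^ (2 ^ k + 1) = b with hT
    have hST : (Finset.univ.filter fun p : F × F =>
        p.1 ^ (2 ^ k + 1) + p.2 ^ (2 ^ k + 1) = b ∧
        (p.1 + a) ^ (2 ^ k + 1) + (p.2 + a) ^ (2 ^ k + 1) = b).card ≤ T.card := by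
      apply Finset.card_le_card_of_injOn (fun p => ((p.1 + p.2) * a⁻¹, p.1))
      · rintro ⟨x, y⟩ hp
        simp only [Finset.mem_coe, Finset.mem_filter, Finset.mem_univ, true_and] at hp
        obtain ⟨h1, h2⟩ := hp
        have hxa := expand (k := k) (a := a) (x := x) (t := (1 : F)) (one_pow _)
        have hya := expand (k := k) (a := a) (x := y) (t := (1 : F)) (one_pow _)
        rw [mul_one] at hxa hya
        have hz : a * (x + y) ^ 2 ^ k + a ^ 2 ^ k * (x + y) = 0 := by
          rw [frob_add]
          linear_combination h2 - h1 - hxa - hya - a ^ 2 ^ k * a * htwo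
        have hτ : ((x + y) * a⁻¹) ^ 2 ^ k = (x + y) * a⁻¹ := ker_char ha hz
        have hat : a * ((x + y) * a⁻¹) = x + y := by field_simp
        have hτne : (x + y) * a⁻¹ ≠ 0 := by
          intro h0
          have hxy : x + y = 0 := by
            rcases mul_eq_zero.mp h0 with h | h
            · exact h
            · exact absurd h (inv_ne_zero ha)
          have hyx : y = x := by linear_combination hxy - CharTwo.add_self_eq_zero x
          rw [hyx] at h1
          apply hb
          rw [← h1, CharTwo.add_self_eq_zero]
        have hyy : y = x + a * ((x + y) * a⁻¹) := by
          rw [hat]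
          linear_combination - CharTwo.add_self_eq_zero x
        simp only [hT, Finset.mem_coe, Finset.mem_filter, Finset.mem_univ, true_and]
        refine ⟨hτ, hτne, ?_⟩
        have h1' := h1
        rw [hyy] at h1'
        rw [expand hτ] at h1'
        linear_combination h1' - x ^ (2 ^ k + 1) * htwo
      · rintro ⟨x, y⟩ hx ⟨x', y'⟩ hx' hpq
        simp only [Prod.mk.injEq] at hpq
        obtain ⟨hp1, hp2⟩ := hpq
        have h3 : x + y = x' + y' := mul_right_cancel₀ (inv_ne_zero ha) hp1
        have h4 : y = y' := by
          rw [hp2] at h3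
          exact add_left_cancel h3
        simp [Prod.ext_iff, hp2, h4]
    have hTcard : T.card ≤ 2 ^ e := by
      rcases T.eq_empty_or_nonempty with hTe | ⟨⟨t0, x0⟩, ht0⟩
      · simp [hTe]
      · have ht0' := ht0
        simp only [hT, Finset.mem_filter, Finset.mem_univ, true_and] at ht0'
        obtain ⟨ht0K, ht0ne, heq0⟩ := ht0'
        have hsub : T ⊆ (Finset.univ.filter fun t : F => t ^ 2 ^ k = t).image
            (fun τ => (t0, x0 + a * τ)) := by
          rintro ⟨t, x⟩ hq
          simp only [hT, Finset.mem_filter, Finset.mem_univ, true_and] at hq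
          obtain ⟨htK, htne, heq⟩ := hq
          have htt0 : t = t0 := unique_t hcard hek hen he1 hodd ha htK htne ht0K ht0ne heq heq0
          rw [htt0] at heq
          have hLL : t0 * (a * x ^ 2 ^ k + a ^ 2 ^ k * x)
              = t0 * (a * x0 ^ 2 ^ k + a ^ 2 ^ k * x0) := by
            linear_combination heq - heq0
          have hLL2 := mul_left_cancel₀ ht0ne hLL
          have hz : a * (x + x0) ^ 2 ^ k + a ^ 2 ^ k * (x + x0) = 0 := by
            rw [frob_add]
            linear_combination hLL2 + (a * x0 ^ 2 ^ k + a ^ 2 ^ k * x0) * htwo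
          have hτ := ker_char ha hz
          refine Finset.mem_image.mpr ⟨(x + x0) * a⁻¹, ?_, ?_⟩
          · simp only [Finset.mem_filter, Finset.mem_univ, true_and]; exact hτ
          · have hat : a * ((x + x0) * a⁻¹) = x + x0 := by field_simp
            rw [hat]
            simp only [Prod.mk.injEq]
            exact ⟨htt0.symm, by linear_combination CharTwo.add_self_eq_zero x0⟩
        calc T.card ≤ _ := Finset.card_le_card hsub
          _ ≤ _ := Finset.card_image_le
          _ = 2 ^ e := hKcard
    exact le_trans hST hTcard
  refine ⟨hbound, 1, 1, one_ne_zero, one_ne_zero,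
    le_antisymm (hbound 1 1 one_ne_zero one_ne_zero) ?_⟩
  have hsub : (Finset.univ.filter fun t : F => t ^ 2 ^ k = t).image (fun x : F => (x, x + 1))
      ⊆ Finset.univ.filter fun p : F × F =>
        p.1 ^ (2 ^ k + 1) + p.2 ^ (2 ^ k + 1) = 1 ∧
        (p.1 + 1) ^ (2 ^ k + 1) + (p.2 + 1) ^ (2 ^ k + 1) = 1 := by
    intro p hp
    obtain ⟨x, hx, rfl⟩ := Finset.mem_image.mp hp
    simp only [Finset.mem_filter, Finset.mem_univ, true_and] at hx ⊢
    have h1 : (x + 1) ^ 2 ^ k = x + 1 := by rw [frob_add, hx, one_pow]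
    have hkey : x ^ (2 ^ k + 1) + (x + 1) ^ (2 ^ k + 1) = 1 := by
      rw [pow_succ, pow_succ, hx, h1]
      linear_combination (x ^ 2 + x) * htwo
    have hx11 : x + 1 + 1 = x := by linear_combination CharTwo.add_self_eq_zero (1 : F)
    exact ⟨hkey, by rw [hx11]; linear_combination hkey⟩
  have hinj : Function.Injective (fun x : F => (x, x + 1)) := by
    intro u v h
    exact (Prod.ext_iff.mp h).1
  calc (2 : ℕ) ^ e = (Finset.univ.filter fun t : F => t ^ 2 ^ k = t).card := hKcard.symm
    _ = ((Finset.univ.filter fun t : F => t ^ 2 ^ k = t).image (fun x : F => (x, x + 1))).card :=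
        (Finset.card_image_of_injective _ hinj).symm
    _ ≤ _ := Finset.card_le_card hsub
end
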